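/- arXiv:2510.14187 — 5 statements merged into one kernel-verified Lean document; each statement's English description precedes it below -/
import Mathlib

section
/- Let B ⊂ ℂ² be the open unit ball and define φ(z₁,z₂) = ((2z₁+1)/4, z₂/4). Then φ is a holomorphic self-map of B satisfying φ ∈ S̃_1(B), but φ ∉ S_1^*(B); in fact the point −(i/2)e₁ lies in D₁ but not in φ(B). Consequently S_1^*(B) is a proper subset of S̃_1(B). -/
open scoped BigOperators ComplexConjugate
open MeasureTheory Filter Set

noncomputable section

/-- `ℂ^N` with the Euclidean norm. -/
abbrev EN (N : ℕ) := EuclideanSpace ℂ (Fin N)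

/-- The open unit ball `B ⊂ ℂ^N`. -/
def unitBall (N : ℕ) : Set (EN N) := Metric.ball 0 1

/-- The inner product of the paper: `⟨z,w⟩ = Σ z_k conj(w_k)`. -/
def ipd {N : ℕ} (z w : EN N) : ℂ := ∑ k, z k * conj (w k)

/-- The radial derivative `Rf(z) = ⟨z, ∇f(z)⟩`, realized as `(Df)(z) z`. -/
def radD {N : ℕ} (f : EN N → ℂ) : EN N → ℂ := fun z => fderiv ℂ f z z

/-- Iterated radial derivative `R^{(n)}`. -/
def radDn {N : ℕ} (n : ℕ) (f : EN N → ℂ) : EN N → ℂ := radD^[n] f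

/-- `H(B)`, the holomorphic functions on the unit ball. -/
def HolB (N : ℕ) : Set (EN N → ℂ) := {f | DifferentiableOn ℂ f (unitBall N)}

/-- `S(B)`, the holomorphic self-maps of the unit ball. -/
def SelfMapB (N : ℕ) : Set (EN N → EN N) :=
  {φ | DifferentiableOn ℂ φ (unitBall N) ∧ Set.MapsTo φ (unitBall N) (unitBall N)}

/-- A normal weight, viewed as a function of the radius `t ∈ [0,1)`. -/
structure IsNormalWeight (ω : ℝ → ℝ) : Prop where
  cont : ContinuousOn ω (Set.Ico 0 1)
  pos : ∀ t ∈ Set.Ico (0:ℝ) 1, 0 < ω t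
  exists_params : ∃ δ a b : ℝ, 0 ≤ δ ∧ δ < 1 ∧ 0 < a ∧ a < b ∧
    AntitoneOn (fun t => ω t / (1 - t) ^ a) (Set.Ico δ 1) ∧
    Filter.Tendsto (fun t => ω t / (1 - t) ^ a) (nhdsWithin 1 (Set.Iio 1)) (nhds 0) ∧
    MonotoneOn (fun t => ω t / (1 - t) ^ b) (Set.Ico δ 1) ∧
    Filter.Tendsto (fun t => ω t / (1 - t) ^ b) (nhdsWithin 1 (Set.Iio 1)) Filter.atTop

/-- The set `{ω(|z|)·|R^{(n)}f(z)| : z ∈ B}`. -/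
def growthSet {N : ℕ} (ω : ℝ → ℝ) (n : ℕ) (f : EN N → ℂ) : Set ℝ :=
  (fun z => ω ‖z‖ * ‖radDn n f z‖) '' unitBall N

/-- membership in the weighted-type `n`-order growth space `H_ω^{(n)}`. -/
def MemHw {N : ℕ} (ω : ℝ → ℝ) (n : ℕ) (f : EN N → ℂ) : Prop :=
  f ∈ HolB N ∧ BddAbove (growthSet ω n f)

/-- The norm of `H_ω^{(n)}`: `‖f‖ = |f(0)| + sup_{z∈B} ω(z)|R^{(n)}f(z)|`. -/
def growthNorm {N : ℕ} (ω : ℝ → ℝ) (n : ℕ) (f : EN N → ℂ) : ℝ :=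
  ‖f 0‖ + sSup (growthSet ω n f)

/-- The operator norm of the point-evaluation functional `δ_z` on `H_ω^{(n)}`. -/
def evalNorm {N : ℕ} (ω : ℝ → ℝ) (n : ℕ) (z : EN N) : ℝ :=
  sSup {r | ∃ f : EN N → ℂ, MemHw ω n f ∧ growthNorm ω n f ≤ 1 ∧ r = ‖f z‖}

/-- The iterated integral `I_ω^k(r)`; `I_ω^0(r) := 1/ω(r)` and
`I_ω^{k+1}(r) = ∫_0^r I_ω^k(t) dt`. -/
def Iw (ω : ℝ → ℝ) : ℕ → ℝ → ℝ
  | 0 => fun r => 1 / ω r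
  | (k+1) => fun r => ∫ t in (0:ℝ)..r, Iw ω k t

/-- The condition `I_ω^k(1) < ∞` (vacuously true for `k = 0`). -/
def IwFinite (ω : ℝ → ℝ) : ℕ → Prop
  | 0 => True
  | (k+1) => BddAbove (Iw ω (k+1) '' Set.Ico (0:ℝ) 1)

/-- The Möbius automorphism `γ_α` of the unit ball. -/
def mobius {N : ℕ} (α : EN N) : EN N → EN N := fun z =>
  (1 - ipd z α)⁻¹ •
    ((α - (ipd z α / (‖α‖ : ℂ)^2) • α) -
      ((Real.sqrt (1 - ‖α‖^2) : ℂ)) • (z - (ipd z α / (‖α‖ : ℂ)^2) • α))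

/-- `S̃_p(B)`. -/
def tildeS {N : ℕ} (p : Fin N) : Set (EN N → EN N) :=
  {φ | φ ∈ SelfMapB N ∧ (∃ z ∈ unitBall N, φ z = 0) ∧
    ∀ z ∈ unitBall N, ∃ z' ∈ unitBall N, ‖φ z' p‖ = ‖φ z‖}

/-- `S_p^*(B)`. -/
def starS {N : ℕ} (p : Fin N) : Set (EN N → EN N) :=
  {φ | φ ∈ SelfMapB N ∧
    ∀ lam : ℂ, ‖lam‖ < 1 → ∃ z ∈ unitBall N, φ z = lam • EuclideanSpace.single p 1}

/-- `𝔅_{i,j}(g)(z) = Σ_{k⃗∈K_{i,j}} C^i_{k⃗} ∏_{t=1}^j R^{(k_t)}g(z)`. -/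
def frakB {N : ℕ} (i j : ℕ) (g : EN N → ℂ) (z : EN N) : ℂ :=
  ∑ k : Fin j → Fin (i+1),
    if (∀ t, 1 ≤ (k t : ℕ)) ∧ (∑ t, (k t : ℕ)) = i then
      ((i.factorial : ℂ) / (∏ t, (((k t : ℕ).factorial : ℕ) : ℂ))) * ∏ t, radDn (k t : ℕ) g z
    else 0

/-- `ℬ^n_j(ψ;g)`. -/
def scrB {N : ℕ} (n j : ℕ) (ψ g : EN N → ℂ) (z : EN N) : ℂ :=
  if j = 0 then radDn n ψ z
  else ∑ i ∈ Finset.Icc j n, (n.choose i : ℂ) * radDn (n - i) ψ z * frakB i j g z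

/-- `liminf_{|z|→1} μ(z)|R^{(n)}f(z)| > 0`. -/
def limInfPos {N : ℕ} (μ : ℝ → ℝ) (n : ℕ) (f : EN N → ℂ) : Prop :=
  ∃ c > (0:ℝ), ∃ r < (1:ℝ), ∀ z ∈ unitBall N, r < ‖z‖ → c ≤ μ ‖z‖ * ‖radDn n f z‖

/-- `lim_{|z|→1} μ(z)|R^{(n)}f(z)| = 0`. -/
def limZero {N : ℕ} (μ : ℝ → ℝ) (n : ℕ) (f : EN N → ℂ) : Prop :=
  ∀ ε > (0:ℝ), ∃ r < (1:ℝ), ∀ z ∈ unitBall N, r < ‖z‖ → μ ‖z‖ * ‖radDn n f z‖ < ε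

/-- The `(n,μ)`-condition on the pair `(ψ, g)` (with `g = φ_p`). -/
def CondNMu {N : ℕ} (μ : ℝ → ℝ) (n : ℕ) (ψ g : EN N → ℂ) : Prop :=
  (MemHw μ n ψ ∧ limInfPos μ n ψ) ∧
  ∀ j : ℕ, 1 ≤ j → j ≤ n →
    MemHw μ n (fun z => ψ z * (g z) ^ j) ∧ limZero μ n (fun z => ψ z * (g z) ^ j)

/-- The weighted composition operator `W_{ψ,φ} f = ψ·(f∘φ)`. -/
def Wop {N : ℕ} (ψ : EN N → ℂ) (φ : EN N → EN N) (f : EN N → ℂ) : EN N → ℂ :=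
  fun z => ψ z * f (φ z)

/-- Boundedness of `W_{ψ,φ} : H_ν^{(k)} → H_μ^{(n)}`. -/
def WBounded {N : ℕ} (ν μ : ℝ → ℝ) (k n : ℕ) (ψ : EN N → ℂ) (φ : EN N → EN N) : Prop :=
  ∃ C > (0:ℝ), ∀ f : EN N → ℂ, MemHw ν k f →
    MemHw μ n (Wop ψ φ f) ∧ growthNorm μ n (Wop ψ φ f) ≤ C * growthNorm ν k f

/-- The operator norm of `W_{ψ,φ} : H_ν^{(k)} → H_μ^{(n)}`. -/
def WNorm {N : ℕ} (ν μ : ℝ → ℝ) (k n : ℕ) (ψ : EN N → ℂ) (φ : EN N → EN N) : ℝ :=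
  sInf {C : ℝ | 0 ≤ C ∧ ∀ f : EN N → ℂ, MemHw ν k f →
    growthNorm μ n (Wop ψ φ f) ≤ C * growthNorm ν k f}

/-- Compactness of `W_{ψ,φ} : H_ν^{(k)} → H_μ^{(n)}`: every bounded sequence in
`H_ν^{(k)}` has a subsequence whose image converges in the norm of `H_μ^{(n)}`. -/
def WCompact {N : ℕ} (ν μ : ℝ → ℝ) (k n : ℕ) (ψ : EN N → ℂ) (φ : EN N → EN N) : Prop :=
  WBounded ν μ k n ψ φ ∧
  ∀ f : ℕ → (EN N → ℂ), (∀ s, MemHw ν k (f s)) →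
    (∃ M : ℝ, ∀ s, growthNorm ν k (f s) ≤ M) →
    ∃ σ : ℕ → ℕ, StrictMono σ ∧ ∃ g : EN N → ℂ, MemHw μ n g ∧
      Filter.Tendsto (fun s => growthNorm μ n (fun z => Wop ψ φ (f (σ s)) z - g z))
        Filter.atTop (nhds 0)

/-- First-order partial derivative `∂f/∂z_l`. -/
def pderiv1 {N : ℕ} (l : Fin N) (f : EN N → ℂ) : EN N → ℂ :=
  fun z => fderiv ℂ f z (EuclideanSpace.single l 1)

/-- Iterated partial derivative `∂^j f/(∂z_{l₁}⋯∂z_{l_j})`. -/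
def pderivs {N : ℕ} : (j : ℕ) → (Fin j → Fin N) → (EN N → ℂ) → (EN N → ℂ)
  | 0, _, f => f
  | (j+1), l, f => pderivs j (fun t => l t.succ) (pderiv1 (l 0) f)

end

lemma norm_lt_iff_aux (x : EN 2) {r : ℝ} (hr : 0 < r) :
    ‖x‖ < r ↔ ‖x 0‖^2 + ‖x 1‖^2 < r^2 := by
  rw [EuclideanSpace.norm_eq, Fin.sum_univ_two, Real.sqrt_lt' hr]

lemma mem_unitBall_iff_aux (x : EN 2) :
    x ∈ unitBall 2 ↔ ‖x 0‖^2 + ‖x 1‖^2 < 1 := by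
  rw [unitBall, mem_ball_zero_iff, norm_lt_iff_aux x one_pos, one_pow]


/-- the map `φ(z₁,z₂) = ((2z₁+1)/4, z₂/4)` belongs to `S̃_1(B)` but not to
`S_1^*(B)` (indeed `−(i/2)e₁ ∈ D₁ ∖ φ(B)`); consequently `S_1^*(B) ⊊ S̃_1(B)`. -/
theorem stmt_2
    (φ : EN 2 → EN 2)
    (hφdef : ∀ z : EN 2,
      φ z = (WithLp.equiv 2 (Fin 2 → ℂ)).symm ![(2 * z 0 + 1) / 4, z 1 / 4]) :
    φ ∈ SelfMapB 2 ∧ φ ∈ tildeS (0 : Fin 2) ∧ φ ∉ starS (0 : Fin 2) ∧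
    (‖(-(Complex.I / 2) : ℂ)‖ < 1 ∧
      (WithLp.equiv 2 (Fin 2 → ℂ)).symm ![-(Complex.I / 2), 0] ∉ φ '' unitBall 2) ∧
    starS (0 : Fin 2) ⊂ tildeS (0 : Fin 2) := by
  -- component formulas
  have hφ0 : ∀ z : EN 2, φ z 0 = (2 * z 0 + 1) / 4 := by
    intro z; rw [hφdef]; simp [WithLp.equiv_symm_apply, PiLp.toLp_apply]
  have hφ1 : ∀ z : EN 2, φ z 1 = z 1 / 4 := by
    intro z; rw [hφdef]; simp [WithLp.equiv_symm_apply, PiLp.toLp_apply]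
  -- key norm bound
  have key : ∀ z ∈ unitBall 2, ‖φ z 0‖^2 + ‖φ z 1‖^2 < (3/4)^2 := by
    intro z hz
    rw [mem_unitBall_iff_aux] at hz
    set a := ‖z 0‖ with ha
    set b := ‖z 1‖ with hb
    have ha0 : 0 ≤ a := norm_nonneg _
    have hb0 : 0 ≤ b := norm_nonneg _
    have h4 : ‖(4:ℂ)‖ = 4 := by norm_num
    have h2 : ‖(2:ℂ)‖ = 2 := by norm_num
    have h0 : ‖φ z 0‖ ≤ (2*a + 1)/4 := by
      rw [hφ0, norm_div, h4]
      have : ‖2 * z 0 + 1‖ ≤ 2*a + 1 := by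
        calc ‖2 * z 0 + 1‖ ≤ ‖2 * z 0‖ + ‖(1:ℂ)‖ := norm_add_le _ _
          _ = 2*a + 1 := by rw [norm_mul, norm_one, h2, ← ha]
      linarith
    have h1 : ‖φ z 1‖ = b/4 := by
      rw [hφ1, norm_div, h4, ← hb]
    have h0sq : ‖φ z 0‖^2 ≤ ((2*a + 1)/4)^2 :=
      pow_le_pow_left₀ (norm_nonneg _) h0 2
    rw [h1]
    nlinarith [hz, ha0, hb0, sq_nonneg (a - 1), sq_nonneg (a + 1)]
  have hself : φ ∈ SelfMapB 2 := by
    constructor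
    · have hφ : φ = fun z => (WithLp.equiv 2 (Fin 2 → ℂ)).symm ![(2*z 0 + 1)/4, z 1/4] :=
        funext hφdef
      rw [hφ]
      apply Differentiable.differentiableOn
      have h0 : Differentiable ℂ (fun z : EN 2 => z 0) :=
        (EuclideanSpace.proj (0 : Fin 2) : EN 2 →L[ℂ] ℂ).differentiable
      have h1 : Differentiable ℂ (fun z : EN 2 => z 1) :=
        (EuclideanSpace.proj (1 : Fin 2) : EN 2 →L[ℂ] ℂ).differentiable
      have hd : Differentiable ℂ (fun z : EN 2 => (![(2*z 0 + 1)/4, z 1/4] : Fin 2 → ℂ)) := by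
        rw [differentiable_pi]
        intro i
        fin_cases i <;>
          simp only [Fin.mk_zero, Fin.mk_one, Matrix.cons_val_zero, Matrix.cons_val_one,
            Matrix.head_cons, div_eq_mul_inv]
        · exact ((h0.const_mul 2).add_const 1).mul_const _
        · exact h1.mul_const _
      exact ((PiLp.continuousLinearEquiv 2 ℂ (fun _ : Fin 2 => ℂ)).symm.differentiable).comp hd
    · intro z hz
      rw [mem_unitBall_iff_aux]
      have := key z hz
      nlinarith
  have hnorm : ∀ z ∈ unitBall 2, ‖φ z‖ < 3/4 := by
    intro z hz
    rw [norm_lt_iff_aux _ (by norm_num : (0:ℝ) < 3/4)]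
    exact key z hz
  -- the contradiction lemma: φ z 0 ≠ -(I/2) for z in ball
  have contra : ∀ z ∈ unitBall 2, φ z 0 ≠ -(Complex.I / 2) := by
    intro z hz heq
    rw [hφ0] at heq
    have hz0 : z 0 = -1/2 - Complex.I := by
      field_simp at heq
      linear_combination heq / 4
    have hn : ‖z 0‖^2 = 5/4 := by
      rw [hz0, Complex.sq_norm, Complex.normSq_apply]
      simp
      norm_num
    rw [mem_unitBall_iff_aux] at hz
    nlinarith [sq_nonneg ‖z 1‖]
  have htilde : φ ∈ tildeS (0 : Fin 2) := by
    refine ⟨hself, ?_, ?_⟩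
    · refine ⟨(WithLp.equiv 2 (Fin 2 → ℂ)).symm ![(-1/2 : ℂ), 0], ?_, ?_⟩
      · rw [mem_unitBall_iff_aux]
        simp [WithLp.equiv_symm_apply, PiLp.toLp_apply]
        norm_num
      · have h0 := hφ0 ((WithLp.equiv 2 (Fin 2 → ℂ)).symm ![(-1/2 : ℂ), 0])
        have h1 := hφ1 ((WithLp.equiv 2 (Fin 2 → ℂ)).symm ![(-1/2 : ℂ), 0])
        ext i
        fin_cases i
        · simp only [Fin.mk_zero] at *
          rw [h0]
          simp [WithLp.equiv_symm_apply, PiLp.toLp_apply]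
          norm_num
        · simp only [Fin.mk_one] at *
          rw [h1]
          simp [WithLp.equiv_symm_apply, PiLp.toLp_apply]
    · intro z hz
      set t := ‖φ z‖ with htdef
      have ht0 : 0 ≤ t := norm_nonneg _
      have ht : t < 3/4 := hnorm z hz
      refine ⟨(WithLp.equiv 2 (Fin 2 → ℂ)).symm ![(((4*t - 1)/2 : ℝ) : ℂ), 0], ?_, ?_⟩
      · rw [mem_unitBall_iff_aux]
        simp only [WithLp.equiv_symm_apply, PiLp.toLp_apply, Matrix.cons_val_zero, Matrix.cons_val_one,
          Matrix.head_cons, norm_zero, Complex.norm_real, Real.norm_eq_abs, sq_abs]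
        nlinarith
      · rw [hφ0]
        simp only [WithLp.equiv_symm_apply, PiLp.toLp_apply, Matrix.cons_val_zero]
        have : (2 * (((4*t - 1)/2 : ℝ) : ℂ) + 1) / 4 = ((t:ℝ) : ℂ) := by
          push_cast; ring
        rw [this, Complex.norm_real, Real.norm_eq_abs, abs_of_nonneg ht0]
  have hstar : φ ∉ starS (0 : Fin 2) := by
    rintro ⟨-, h⟩
    have hI : ‖(-(Complex.I / 2) : ℂ)‖ < 1 := by
      rw [norm_neg, norm_div, Complex.norm_I]
      norm_num
    obtain ⟨z, hz, hzeq⟩ := h (-(Complex.I / 2)) hI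
    apply contra z hz
    have := congrArg (fun w : EN 2 => w 0) hzeq
    simpa [EuclideanSpace.single_apply] using this
  have hmem : (WithLp.equiv 2 (Fin 2 → ℂ)).symm ![-(Complex.I / 2), 0] ∉ φ '' unitBall 2 := by
    rintro ⟨z, hz, hzeq⟩
    apply contra z hz
    have := congrArg (fun w : EN 2 => w 0) hzeq
    simpa [WithLp.equiv_symm_apply, PiLp.toLp_apply] using this
  have hI : ‖(-(Complex.I / 2) : ℂ)‖ < 1 := by
    rw [norm_neg, norm_div, Complex.norm_I]; norm_num
  have hsub : starS (0 : Fin 2) ⊆ tildeS (0 : Fin 2) := by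
    rintro ψ ⟨hs, hstar'⟩
    refine ⟨hs, ?_, ?_⟩
    · obtain ⟨z, hz, hzeq⟩ := hstar' 0 (by simp)
      exact ⟨z, hz, by rw [hzeq, zero_smul]⟩
    · intro z hz
      have hlt : ‖ψ z‖ < 1 := by
        have := hs.2 hz
        rwa [unitBall, mem_ball_zero_iff] at this
      obtain ⟨z', hz', heq⟩ := hstar' (‖ψ z‖ : ℂ)
        (by rw [Complex.norm_real, Real.norm_eq_abs, abs_of_nonneg (norm_nonneg _)]; exact hlt)
      refine ⟨z', hz', ?_⟩
      rw [heq]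
      simp [EuclideanSpace.single_apply, Complex.norm_real]
  exact ⟨hself, htilde, hstar, ⟨hI, hmem⟩,
    ⟨hsub, fun h => hstar (h htilde)⟩⟩
end

section
/- Fix α₁,…,α_N ∈ ℝ, p ∈ {1,…,N}, and a = (a₁,…,a_N) in the open unit ball B ⊂ ℂ^N with |a_p| = max_{1≤k≤N} |a_k|. Define φ(z) = (e^{iα₁}a₁z₁, …, e^{iα_N}a_Nz_N). Then φ is a holomorphic self-map of B with φ(0) = 0, φ ∈ S̃_p(B), and φ ∉ S_p^*(B). -/
open scoped BigOperators ComplexConjugate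
open MeasureTheory Filter Set

lemma coord_norm_le' {N : ℕ} (z : EN N) (k : Fin N) : ‖z k‖ ≤ ‖z‖ := by
  rw [EuclideanSpace.norm_eq, ← Real.sqrt_sq (norm_nonneg (z k))]
  exact Real.sqrt_le_sqrt
    (Finset.single_le_sum (f := fun i => ‖z i‖ ^ 2) (fun i _ => sq_nonneg _)
      (Finset.mem_univ k))

lemma norm_exp_I_mul' (α : ℝ) : ‖Complex.exp (Complex.I * (α : ℂ))‖ = 1 := by
  rw [Complex.norm_exp]
  simp

/-- for `φ(z) = (e^{iα₁}a₁z₁, …, e^{iα_N}a_Nz_N)` with `a ∈ B` and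
`|a_p| = max_k |a_k|`, one has `φ ∈ S(B)`, `φ(0) = 0`, `φ ∈ S̃_p(B)` and `φ ∉ S_p^*(B)`. -/
theorem stmt_3 {N : ℕ} (p : Fin N) (αv : Fin N → ℝ) (a : EN N)
    (ha : a ∈ unitBall N) (hap : ∀ k : Fin N, ‖a k‖ ≤ ‖a p‖)
    (φ : EN N → EN N)
    (hφdef : ∀ z : EN N, φ z =
      (WithLp.equiv 2 (Fin N → ℂ)).symm
        (fun k => Complex.exp (Complex.I * (αv k : ℂ)) * a k * z k)) :
    φ ∈ SelfMapB N ∧ φ 0 = 0 ∧ φ ∈ tildeS p ∧ φ ∉ starS p := by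
  have hball : ∀ w : EN N, w ∈ unitBall N ↔ ‖w‖ < 1 := by
    intro w; simp [unitBall, Metric.mem_ball, dist_zero_right]
  have hcomp : ∀ (z : EN N) (k : Fin N),
      φ z k = Complex.exp (Complex.I * (αv k : ℂ)) * a k * z k := by
    intro z k; rw [hφdef]; rfl
  have hnormk : ∀ (z : EN N) (k : Fin N), ‖φ z k‖ = ‖a k‖ * ‖z k‖ := by
    intro z k
    rw [hcomp, norm_mul, norm_mul, norm_exp_I_mul', one_mul]
  have hnorm : ∀ z : EN N, ‖φ z‖ ≤ ‖a p‖ * ‖z‖ := by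
    intro z
    rw [EuclideanSpace.norm_eq, EuclideanSpace.norm_eq]
    have h1 : ∑ k, ‖φ z k‖ ^ 2 ≤ ‖a p‖ ^ 2 * ∑ k, ‖z k‖ ^ 2 := by
      rw [Finset.mul_sum]
      refine Finset.sum_le_sum fun k _ => ?_
      rw [hnormk, mul_pow]
      exact mul_le_mul_of_nonneg_right
        (pow_le_pow_left₀ (norm_nonneg _) (hap k) 2) (sq_nonneg _)
    calc Real.sqrt (∑ k, ‖φ z k‖ ^ 2)
        ≤ Real.sqrt (‖a p‖ ^ 2 * ∑ k, ‖z k‖ ^ 2) := Real.sqrt_le_sqrt h1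
      _ = ‖a p‖ * Real.sqrt (∑ k, ‖z k‖ ^ 2) := by
          rw [Real.sqrt_mul (sq_nonneg _), Real.sqrt_sq (norm_nonneg _)]
  have hanorm : ‖a‖ < 1 := (hball a).mp ha
  have hap1 : ‖a p‖ < 1 := lt_of_le_of_lt (coord_norm_le' a p) hanorm
  have hdiff : Differentiable ℂ φ := by
    have hg : Differentiable ℂ (fun z : EN N =>
        (fun k => Complex.exp (Complex.I * (αv k : ℂ)) * a k *
          EuclideanSpace.proj k z : Fin N → ℂ)) := by fun_prop
    have hφeq : φ = fun z =>
        (PiLp.continuousLinearEquiv 2 ℂ (fun _ : Fin N => ℂ)).symm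
          (fun k => Complex.exp (Complex.I * (αv k : ℂ)) * a k *
            EuclideanSpace.proj k z) := by
      funext z; rw [hφdef]; rfl
    rw [hφeq]
    exact ((PiLp.continuousLinearEquiv 2 ℂ
      (fun _ : Fin N => ℂ)).symm.differentiable).comp hg
  have hmaps : Set.MapsTo φ (unitBall N) (unitBall N) := by
    intro z hz
    rw [hball] at hz ⊢
    calc ‖φ z‖ ≤ ‖a p‖ * ‖z‖ := hnorm z
      _ ≤ 1 * ‖z‖ := mul_le_mul_of_nonneg_right hap1.le (norm_nonneg _)
      _ = ‖z‖ := one_mul _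
      _ < 1 := hz
  have hself : φ ∈ SelfMapB N := ⟨hdiff.differentiableOn, hmaps⟩
  have hzero : φ 0 = 0 := by
    ext k
    rw [hcomp]
    simp [show (0 : EN N) k = 0 from rfl]
  have h0ball : (0 : EN N) ∈ unitBall N := by rw [hball]; simp
  refine ⟨hself, hzero, ⟨hself, ⟨0, h0ball, hzero⟩, ?_⟩, ?_⟩
  · -- tildeS third condition
    intro z hz
    by_cases hz0 : φ z = 0
    · exact ⟨0, h0ball, by rw [hzero, hz0]; simp [show (0 : EN N) p = 0 from rfl]⟩
    · have hapne : ‖a p‖ ≠ 0 := by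
        intro h0
        apply hz0
        ext k
        have hk0 : a k = 0 := norm_le_zero_iff.mp (h0 ▸ hap k)
        rw [hcomp, hk0]
        simp
      have hapos : 0 < ‖a p‖ := lt_of_le_of_ne (norm_nonneg _) (Ne.symm hapne)
      set t : ℝ := ‖φ z‖ / ‖a p‖ with ht
      have htnonneg : 0 ≤ t := div_nonneg (norm_nonneg _) (norm_nonneg _)
      have htlt : t < 1 := by
        rw [ht, div_lt_one hapos]
        calc ‖φ z‖ ≤ ‖a p‖ * ‖z‖ := hnorm z
          _ < ‖a p‖ * 1 := by
              exact mul_lt_mul_of_pos_left ((hball z).mp hz) hapos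
          _ = ‖a p‖ := mul_one _
      refine ⟨(t : ℂ) • EuclideanSpace.single p 1, ?_, ?_⟩
      · rw [hball, norm_smul, EuclideanSpace.norm_single, norm_one, mul_one,
          Complex.norm_real, Real.norm_of_nonneg htnonneg]
        exact htlt
      · have hzp : ((t : ℂ) • EuclideanSpace.single p (1:ℂ)) p = (t : ℂ) := by
          simp [EuclideanSpace.single_apply]
        rw [hnormk, hzp, Complex.norm_real, Real.norm_of_nonneg htnonneg, ht,
          mul_div_cancel₀ _ hapne]
  · -- not in starS
    intro hstar
    obtain ⟨-, h2⟩ := hstar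
    set lam : ℂ := (((‖a p‖ + 1) / 2 : ℝ) : ℂ) with hlamdef
    have hlamnorm : ‖lam‖ = (‖a p‖ + 1) / 2 := by
      rw [hlamdef, Complex.norm_real, Real.norm_of_nonneg (by positivity)]
    have hlam1 : ‖lam‖ < 1 := by rw [hlamnorm]; linarith
    obtain ⟨z, hz, hzeq⟩ := h2 lam hlam1
    have hp : φ z p = lam := by
      rw [hzeq]
      simp [EuclideanSpace.single_apply, show ∀ (c : ℂ) (w : EN N), (c • w) p = c * w p from fun _ _ => rfl]
    have h3 : ‖a p‖ * ‖z p‖ = (‖a p‖ + 1) / 2 := by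
      rw [← hnormk, hp, hlamnorm]
    have hzp1 : ‖z p‖ < 1 := lt_of_le_of_lt (coord_norm_le' z p) ((hball z).mp hz)
    nlinarith [norm_nonneg (a p), norm_nonneg (z p)]
end

section
/- Let ν be a normal weight on B, and let h : B → (0,∞) be a bounded function with liminf_{|z|→1} h(z) > 0. Let p ∈ {1,…,N}, let j ≥ 1 be an integer, and assume φ ∈ S_p^*(B) with φ(0) = 0 and M_p^j := sup_{w∈B} h(w)·‖δ_{φ_p(w)}^{H_ν^{(j)}}‖ < ∞. Then there exists a constant C_j > 0 such that sup_{z∈B} h(z)·‖δ_{φ(z)}^{H_ν^{(j)}}‖ ≤ C_j · M_p^j. -/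
open scoped BigOperators ComplexConjugate
open MeasureTheory Filter Set

open scoped InnerProductSpace
noncomputable section AuxSec
instance ENms (N : ℕ) : MeasurableSpace (EN N) := borel _
instance ENbs (N : ℕ) : BorelSpace (EN N) := ⟨rfl⟩
variable {N : ℕ}

lemma en_coord_le (x : EN N) (i : Fin N) : ‖x i‖ ≤ ‖x‖ := by
  have h1 : ⟪EuclideanSpace.single i (1:ℂ), x⟫_ℂ = x i := by
    simp [EuclideanSpace.inner_single_left]
  calc ‖x i‖ = ‖⟪EuclideanSpace.single i (1:ℂ), x⟫_ℂ‖ := by rw [h1]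
    _ ≤ ‖EuclideanSpace.single i (1:ℂ)‖ * ‖x‖ := norm_inner_le_norm _ _
    _ = ‖x‖ := by simp

lemma en_sum_single (x : EN N) : ∑ m, x m • EuclideanSpace.single m (1:ℂ) = x := by
  ext i
  rw [WithLp.ofLp_sum, Finset.sum_apply]
  simp [EuclideanSpace.single_apply, mul_ite, Finset.sum_ite_eq']

lemma opnorm_le_sum (T : EN N →L[ℂ] ℂ) :
    ‖T‖ ≤ ∑ m, ‖T (EuclideanSpace.single m (1:ℂ))‖ := by
  refine T.opNorm_le_bound (by positivity) (fun x => ?_)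
  conv_lhs => rw [← en_sum_single x]
  rw [map_sum]
  calc ‖∑ m, T (x m • EuclideanSpace.single m (1:ℂ))‖
      ≤ ∑ m, ‖T (x m • EuclideanSpace.single m (1:ℂ))‖ := norm_sum_le _ _
    _ ≤ ∑ m, ‖T (EuclideanSpace.single m (1:ℂ))‖ * ‖x‖ := by
        refine Finset.sum_le_sum (fun m _ => ?_)
        rw [T.map_smul, norm_smul]
        calc ‖x m‖ * ‖T (EuclideanSpace.single m (1:ℂ))‖
            ≤ ‖x‖ * ‖T (EuclideanSpace.single m (1:ℂ))‖ :=
              mul_le_mul_of_nonneg_right (en_coord_le x m) (norm_nonneg _)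
          _ = _ := mul_comm _ _
    _ = (∑ m, ‖T (EuclideanSpace.single m (1:ℂ))‖) * ‖x‖ := by rw [Finset.sum_mul]

lemma slice_hasDerivAt {f : EN N → ℂ} {z : EN N} (v : EN N) {D : EN N →L[ℂ] ℂ}
    (hf : HasFDerivAt f D z) :
    HasDerivAt (fun lam : ℂ => f (z + lam • v)) (D v) 0 := by
  have h1 : HasDerivAt (fun lam : ℂ => z + lam • v) v 0 := by
    simpa using ((hasDerivAt_id (0:ℂ)).smul_const v).const_add z
  have hz : z = z + (0:ℂ) • v := by simp
  rw [hz] at hf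
  have h2 := hf.comp_hasDerivAt 0 h1
  exact h2

lemma fderiv_apply_bound {f : EN N → ℂ} {z : EN N} {r M : ℝ} (hr : 0 < r)
    (hf : DifferentiableOn ℂ f (Metric.ball z r))
    (hM : ∀ y ∈ Metric.ball z r, ‖f y‖ ≤ M) (v : EN N) (hv : ‖v‖ ≤ 1) :
    ‖fderiv ℂ f z v‖ ≤ (2*M+1)/r := by
  have hM0 : 0 ≤ M := le_trans (norm_nonneg _) (hM z (Metric.mem_ball_self hr))
  have hmaps : ∀ lam : ℂ, lam ∈ Metric.ball (0:ℂ) r → z + lam • v ∈ Metric.ball z r := by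
    intro lam hlam
    rw [Metric.mem_ball, dist_eq_norm] at hlam ⊢
    calc ‖z + lam • v - z‖ = ‖lam • v‖ := by rw [add_sub_cancel_left]
      _ ≤ ‖lam‖ * ‖v‖ := by rw [norm_smul]
      _ ≤ ‖lam‖ * 1 := by gcongr
      _ < r := by simpa using hlam
  set s : ℂ → ℂ := fun lam => f (z + lam • v) with hs
  have hsd : DifferentiableOn ℂ s (Metric.ball (0:ℂ) r) := by
    intro lam hlam
    have h1 : DifferentiableWithinAt ℂ (fun lam : ℂ => z + lam • v) (Metric.ball (0:ℂ) r) lam :=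
      (((differentiableAt_id).smul_const v).const_add z).differentiableWithinAt
    exact (hf (z + lam • v) (hmaps lam hlam)).comp lam h1 (fun x hx => hmaps x hx)
  have hsm : Set.MapsTo s (Metric.ball (0:ℂ) r) (Metric.ball (s 0) (2*M+1)) := by
    intro lam hlam
    rw [Metric.mem_ball, dist_eq_norm]
    have h0 : (0:ℂ) ∈ Metric.ball (0:ℂ) r := Metric.mem_ball_self hr
    calc ‖s lam - s 0‖ ≤ ‖s lam‖ + ‖s 0‖ := norm_sub_le _ _
      _ ≤ M + M := add_le_add (hM _ (hmaps lam hlam)) (hM _ (hmaps 0 h0))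
      _ < 2*M+1 := by linarith
  have hb := Complex.norm_deriv_le_div_of_mapsTo_ball hsd (hsm.mono_right Metric.ball_subset_closedBall) hr
  have hfz : HasFDerivAt f (fderiv ℂ f z) z :=
    (hf.differentiableAt (Metric.isOpen_ball.mem_nhds (Metric.mem_ball_self hr))).hasFDerivAt
  have hds : HasDerivAt s (fderiv ℂ f z v) 0 := slice_hasDerivAt v hfz
  rwa [hds.deriv] at hb

lemma reg {U : Set (EN N)} (hU : IsOpen U) {f : EN N → ℂ} (hf : DifferentiableOn ℂ f U) :
    DifferentiableOn ℂ (fun z => fderiv ℂ f z) U := by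
  intro z₀ hz₀
  obtain ⟨ε, hε, hball⟩ := Metric.isOpen_iff.1 hU z₀ hz₀
  set R := ε/4 with hRdef
  have hR0 : 0 < R := by positivity
  have hsub3 : Metric.closedBall z₀ (3*R) ⊆ U := by
    intro y hy
    apply hball
    rw [Metric.mem_closedBall] at hy
    rw [Metric.mem_ball]
    calc dist y z₀ ≤ 3*R := hy
      _ < ε := by rw [hRdef]; linarith
  obtain ⟨M, hM⟩ := (isCompact_closedBall z₀ (3*R)).exists_bound_of_continuousOn
    (hf.continuousOn.mono hsub3)
  have hM0 : 0 ≤ M := le_trans (norm_nonneg _)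
    (hM z₀ (Metric.mem_closedBall_self (by positivity)))
  -- uniform bound for fderiv on closedBall z₀ (2R)
  have hBop : ∀ y ∈ Metric.closedBall z₀ (2*R), ‖fderiv ℂ f y‖ ≤ (N:ℝ) * ((2*M+1)/R) := by
    intro y hy
    rw [Metric.mem_closedBall] at hy
    have hby : Metric.ball y R ⊆ Metric.closedBall z₀ (3*R) := by
      intro x hx
      rw [Metric.mem_ball] at hx
      rw [Metric.mem_closedBall]
      calc dist x z₀ ≤ dist x y + dist y z₀ := dist_triangle _ _ _
        _ ≤ R + 2*R := by push_cast; exact add_le_add hx.le hy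
        _ = 3*R := by ring
    have hcomp : ∀ m : Fin N, ‖fderiv ℂ f y (EuclideanSpace.single m (1:ℂ))‖ ≤ (2*M+1)/R := by
      intro m
      exact fderiv_apply_bound hR0 (hf.mono (hby.trans hsub3))
        (fun x hx => hM x (hby hx)) _ (by simp)
    calc ‖fderiv ℂ f y‖ ≤ ∑ m, ‖fderiv ℂ f y (EuclideanSpace.single m (1:ℂ))‖ :=
          opnorm_le_sum _
      _ ≤ ∑ _m : Fin N, (2*M+1)/R := Finset.sum_le_sum (fun m _ => hcomp m)
      _ = (N:ℝ) * ((2*M+1)/R) := by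
          rw [Finset.sum_const, Finset.card_univ, Fintype.card_fin, nsmul_eq_mul]
  have hsub2 : Metric.closedBall z₀ (2*R) ⊆ U := by
    intro y hy
    exact hsub3 (Metric.closedBall_subset_closedBall (by linarith) hy)
  -- each partial derivative is differentiable at z₀
  have key : ∀ m : Fin N,
      DifferentiableAt ℂ (fun z => fderiv ℂ f z (EuclideanSpace.single m (1:ℂ))) z₀ := by
    intro m
    set e : EN N := EuclideanSpace.single m (1:ℂ) with he
    have hne : ‖e‖ = 1 := by simp [he]
    have hmem : ∀ z : EN N, z ∈ Metric.ball z₀ R → ∀ θ : ℝ,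
        z + circleMap 0 R θ • e ∈ Metric.closedBall z₀ (2*R) := by
      intro z hz θ
      rw [Metric.mem_ball] at hz
      rw [Metric.mem_closedBall, dist_eq_norm]
      have h1 : ‖circleMap 0 R θ • e‖ = R := by
        rw [norm_smul, hne, mul_one, norm_circleMap_zero, abs_of_pos hR0]
      calc ‖z + circleMap 0 R θ • e - z₀‖ ≤ ‖z - z₀‖ + ‖circleMap 0 R θ • e‖ := by
            rw [add_sub_right_comm]; exact norm_add_le _ _
        _ ≤ R + R := by
            refine add_le_add ?_ h1.le
            rw [← dist_eq_norm]; exact hz.le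
        _ = 2*R := by ring
    set Φ : EN N → ℝ → ℂ := fun z θ =>
      deriv (circleMap 0 R) θ • (((circleMap 0 R θ) ^ 2)⁻¹ • f (z + circleMap 0 R θ • e))
      with hΦ
    set Φ' : EN N → ℝ → (EN N →L[ℂ] ℂ) := fun z θ =>
      (deriv (circleMap 0 R) θ * ((circleMap 0 R θ) ^ 2)⁻¹) •
        (fderiv ℂ f (z + circleMap 0 R θ • e)) with hΦ'
    -- the integral representation
    have heq : ∀ z ∈ Metric.ball z₀ R,
        fderiv ℂ f z e =
          (2 * Real.pi * Complex.I : ℂ)⁻¹ • ∫ θ in (0:ℝ)..(2*Real.pi), Φ z θ := by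
      intro z hz
      have hdz : DifferentiableOn ℂ (fun lam : ℂ => f (z + lam • e)) (Metric.ball (0:ℂ) (2*R)) := by
        intro lam hlam
        have hmem2 : z + lam • e ∈ U := by
          apply hsub3
          rw [Metric.mem_ball, dist_zero_right] at hlam
          rw [Metric.mem_closedBall, dist_eq_norm, add_sub_right_comm]
          calc ‖z - z₀ + lam • e‖ ≤ ‖z - z₀‖ + ‖lam • e‖ := norm_add_le _ _
            _ ≤ R + 2*R := by
                refine add_le_add ?_ ?_
                · rw [← dist_eq_norm]; exact (Metric.mem_ball.1 hz).le
                · rw [norm_smul, hne, mul_one]; exact hlam.le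
            _ = 3*R := by ring
        have h1 : DifferentiableWithinAt ℂ (fun lam : ℂ => z + lam • e)
            (Metric.ball (0:ℂ) (2*R)) lam :=
          (((differentiableAt_id).smul_const e).const_add z).differentiableWithinAt
        refine ((hf (z + lam • e) hmem2).differentiableAt (hU.mem_nhds hmem2)).comp_differentiableWithinAt lam h1
      have hcd : Complex.cderiv R (fun lam : ℂ => f (z + lam • e)) 0
          = deriv (fun lam : ℂ => f (z + lam • e)) 0 :=
        Complex.cderiv_eq_deriv Metric.isOpen_ball hdz hR0
          (Metric.closedBall_subset_ball (by linarith))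
      have hfz : HasFDerivAt f (fderiv ℂ f z) z := by
        have hzU : z ∈ U := hball (Metric.ball_subset_ball (by linarith) hz)
        exact (hf.differentiableAt (hU.mem_nhds hzU)).hasFDerivAt
      have hder : deriv (fun lam : ℂ => f (z + lam • e)) 0 = fderiv ℂ f z e :=
        (slice_hasDerivAt e hfz).deriv
      rw [← hder, ← hcd]
      simp only [Complex.cderiv, circleIntegral, sub_zero, hΦ]
    -- differentiate under the integral sign
    have hbound : ∀ θ : ℝ, ∀ z ∈ Metric.ball z₀ R,
        ‖Φ' z θ‖ ≤ R⁻¹ * ((N:ℝ) * ((2*M+1)/R)) := by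
      intro θ z hz
      simp only [hΦ']
      have h1 : ‖deriv (circleMap 0 R) θ * ((circleMap 0 R θ) ^ 2)⁻¹‖ = R⁻¹ := by
        rw [norm_mul, deriv_circleMap]
        simp only [norm_mul, norm_inv, norm_pow, norm_circleMap_zero,
          Complex.norm_I, abs_of_pos hR0, mul_one]
        rw [pow_two]
        field_simp
      refine le_trans (ContinuousLinearMap.opNorm_smul_le _ _) ?_
      rw [h1]
      have h2 := hBop _ (hmem z hz θ)
      have h3 : (0:ℝ) ≤ R⁻¹ := inv_nonneg.2 hR0.le
      exact mul_le_mul_of_nonneg_left h2 h3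
    have hcont : ∀ z ∈ Metric.ball z₀ R, Continuous (fun θ => Φ z θ) := by
      intro z hz
      rw [hΦ]
      have h1 : Continuous (fun θ : ℝ => f (z + circleMap 0 R θ • e)) := by
        refine (hf.continuousOn.mono hsub2).comp_continuous ?_ ?_
        · exact (continuous_const.add ((continuous_circleMap 0 R).smul continuous_const))
        · exact fun θ => hmem z hz θ
      have hc1 : Continuous (fun θ : ℝ => deriv (circleMap 0 R) θ) := by
        simp only [deriv_circleMap]; exact ((continuous_circleMap 0 R).mul continuous_const)
      have hc2 : Continuous (fun θ : ℝ => ((circleMap 0 R θ) ^ 2)⁻¹) :=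
        ((continuous_circleMap 0 R).pow 2).inv₀ (fun θ => by
          simp [circleMap_ne_center hR0.ne'])
      exact hc1.smul (hc2.smul h1)
    have hint : HasFDerivAt (fun z => ∫ θ in (0:ℝ)..(2*Real.pi), Φ z θ)
        (∫ θ in (0:ℝ)..(2*Real.pi), Φ' z₀ θ) z₀ := by
      apply intervalIntegral.hasFDerivAt_integral_of_dominated_of_fderiv_le
        (s := Metric.ball z₀ R) (hs := Metric.ball_mem_nhds z₀ hR0) (bound := fun _ => R⁻¹ * ((N:ℝ) * ((2*M+1)/R)))
      · filter_upwards [Metric.ball_mem_nhds z₀ hR0] with z hz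
        exact (hcont z hz).aestronglyMeasurable
      · exact ((hcont z₀ (Metric.mem_ball_self hR0))).intervalIntegrable _ _
      · -- measurability of Φ' z₀
        have hc1 : Continuous (fun θ : ℝ => deriv (circleMap 0 R) θ * ((circleMap 0 R θ) ^ 2)⁻¹) := by
          have : Continuous (fun θ : ℝ => deriv (circleMap 0 R) θ) := by
            simp only [deriv_circleMap]; exact ((continuous_circleMap 0 R).mul continuous_const)
          exact this.mul (((continuous_circleMap 0 R).pow 2).inv₀ (fun θ => by
            simp [circleMap_ne_center hR0.ne']))
        have hc3 : Measurable (fun θ : ℝ => fderiv ℂ f (z₀ + circleMap 0 R θ • e)) :=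
          (measurable_fderiv ℂ f).comp
            ((measurable_const.add ((continuous_circleMap 0 R).smul continuous_const).measurable))
        exact (hc1.aestronglyMeasurable.smul
          hc3.stronglyMeasurable.aestronglyMeasurable : _)
      · filter_upwards with θ hθ z hz
        exact hbound θ z hz
      · exact intervalIntegrable_const
      · filter_upwards with θ hθ z hz
        have hmemz : z + circleMap 0 R θ • e ∈ U := hsub2 (hmem z hz θ)
        have hdf : HasFDerivAt f (fderiv ℂ f (z + circleMap 0 R θ • e)) (z + circleMap 0 R θ • e) :=
          (hf.differentiableAt (hU.mem_nhds hmemz)).hasFDerivAt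
        have htr : HasFDerivAt (fun x : EN N => f (x + circleMap 0 R θ • e))
            (fderiv ℂ f (z + circleMap 0 R θ • e)) z := by
          have h2 : HasFDerivAt (fun x : EN N => x + circleMap 0 R θ • e)
              (ContinuousLinearMap.id ℂ (EN N)) z := (hasFDerivAt_id z).add_const _
          have h3 := hdf.comp z h2
          rw [ContinuousLinearMap.comp_id] at h3
          exact h3
        have h5 := htr.const_smul (deriv (circleMap 0 R) θ * ((circleMap 0 R θ) ^ 2)⁻¹)
        simp only [hΦ, hΦ', smul_smul]
        exact h5
    have hev : (fun z => fderiv ℂ f z e) =ᶠ[nhds z₀]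
        (fun z => (2 * Real.pi * Complex.I : ℂ)⁻¹ • ∫ θ in (0:ℝ)..(2*Real.pi), Φ z θ) := by
      filter_upwards [Metric.ball_mem_nhds z₀ hR0] with z hz
      exact heq z hz
    have hdInt : DifferentiableAt ℂ
        (fun z => (2 * Real.pi * Complex.I : ℂ)⁻¹ • ∫ θ in (0:ℝ)..(2*Real.pi), Φ z θ) z₀ :=
      hint.differentiableAt.const_smul ((2 * Real.pi * Complex.I : ℂ)⁻¹)
    exact hdInt.congr_of_eventuallyEq hev
  -- assemble
  have hrep : ∀ z ∈ U, fderiv ℂ f z =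
      ∑ m, (fderiv ℂ f z (EuclideanSpace.single m (1:ℂ))) • (EuclideanSpace.proj m : EN N →L[ℂ] ℂ) := by
    intro z hz
    ext x
    rw [ContinuousLinearMap.sum_apply]
    conv_lhs => rw [← en_sum_single x]
    rw [map_sum]
    refine Finset.sum_congr rfl (fun m _ => ?_)
    rw [(fderiv ℂ f z).map_smul, ContinuousLinearMap.smul_apply]
    simp [PiLp.proj_apply, smul_eq_mul, mul_comm]
  have hds : DifferentiableAt ℂ (fun z =>
      ∑ m, (fderiv ℂ f z (EuclideanSpace.single m (1:ℂ))) • (EuclideanSpace.proj m : EN N →L[ℂ] ℂ)) z₀ := by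
    apply DifferentiableAt.fun_sum
    intro m _
    exact (key m).smul_const _
  have hev2 : (fun z => fderiv ℂ f z) =ᶠ[nhds z₀] (fun z =>
      ∑ m, (fderiv ℂ f z (EuclideanSpace.single m (1:ℂ))) • (EuclideanSpace.proj m : EN N →L[ℂ] ℂ)) := by
    filter_upwards [hU.mem_nhds hz₀] with z hz
    exact hrep z hz
  exact (hds.congr_of_eventuallyEq hev2).differentiableWithinAt


lemma radDn_succ' {N : ℕ} (n : ℕ) (f : EN N → ℂ) : radDn (n+1) f = radD (radDn n f) :=
  Function.iterate_succ_apply' radD n f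

lemma radDn_zero'' {N : ℕ} (f : EN N → ℂ) : radDn 0 f = f := rfl

lemma radD_const' {N : ℕ} (c : ℂ) : radD (fun _ : EN N => c) = fun _ => (0:ℂ) := by
  funext z; simp [radD, fderiv_const]

lemma radDn_zero_fun {N : ℕ} (n : ℕ) : radDn n (fun _ : EN N => (0:ℂ)) = fun _ => 0 := by
  induction n with
  | zero => rfl
  | succ m ih =>
      show radD^[m+1] _ = _
      rw [Function.iterate_succ_apply]
      have : radD (fun _ : EN N => (0:ℂ)) = fun _ => (0:ℂ) := radD_const' 0
      rw [this]
      exact ih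

lemma radDn_const {N : ℕ} (n : ℕ) (hn : 1 ≤ n) (c : ℂ) :
    radDn n (fun _ : EN N => c) = fun _ => 0 := by
  obtain ⟨m, rfl⟩ := Nat.exists_eq_add_of_le hn
  show radD^[1+m] _ = _
  rw [add_comm, Function.iterate_succ_apply]
  rw [show radD (fun _ : EN N => c) = fun _ => (0:ℂ) from radD_const' c]
  exact radDn_zero_fun m

lemma radD_at_zero {N : ℕ} (g : EN N → ℂ) : radD g 0 = 0 := by
  show fderiv ℂ g 0 0 = 0
  exact (fderiv ℂ g 0).map_zero

lemma radDn_at_zero {N : ℕ} {n : ℕ} (hn : 1 ≤ n) (f : EN N → ℂ) : radDn n f 0 = 0 := by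
  obtain ⟨m, rfl⟩ := Nat.exists_eq_add_of_le hn
  rw [add_comm, radDn_succ']
  exact radD_at_zero _

lemma radD_diffOn {N : ℕ} {U : Set (EN N)} (hU : IsOpen U) {f : EN N → ℂ}
    (hf : DifferentiableOn ℂ f U) : DifferentiableOn ℂ (radD f) U :=
  (reg hU hf).clm_apply differentiableOn_id

lemma radDn_diffOn {N : ℕ} (n : ℕ) {U : Set (EN N)} (hU : IsOpen U) {f : EN N → ℂ}
    (hf : DifferentiableOn ℂ f U) : DifferentiableOn ℂ (radDn n f) U := by
  induction n with
  | zero => exact hf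
  | succ m ih => rw [radDn_succ']; exact radD_diffOn hU ih

lemma fderiv_cmul_comp {N : ℕ} {h : EN N → ℂ} {z : EN N} (c : ℂ) (L : EN N →L[ℂ] EN N)
    (hh : DifferentiableAt ℂ h (L z)) :
    fderiv ℂ (fun y => c * h (L y)) z = c • ((fderiv ℂ h (L z)).comp L) := by
  have h1 : HasFDerivAt (fun y => h (L y)) ((fderiv ℂ h (L z)).comp L) z :=
    hh.hasFDerivAt.comp z L.hasFDerivAt
  exact (h1.const_mul c).fderiv

lemma mem_unitBall_iff {N : ℕ} {z : EN N} : z ∈ unitBall N ↔ ‖z‖ < 1 := by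
  rw [unitBall, mem_ball_zero_iff]

lemma radDn_comp {N : ℕ} (c : ℂ) (L : EN N →L[ℂ] EN N) (hL : ∀ x, ‖L x‖ ≤ ‖x‖)
    {f : EN N → ℂ} (hf : DifferentiableOn ℂ f (unitBall N)) (n : ℕ) :
    ∀ z ∈ unitBall N, radDn n (fun y => c * f (L y)) z = c * radDn n f (L z) := by
  have hopen : IsOpen (unitBall N) := Metric.isOpen_ball
  induction n with
  | zero => intro z hz; rfl
  | succ m ih =>
    intro z hz
    have hLz : L z ∈ unitBall N := by
      rw [mem_unitBall_iff]
      exact lt_of_le_of_lt (hL z) (mem_unitBall_iff.1 hz)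
    have hdiff : DifferentiableOn ℂ (radDn m f) (unitBall N) := radDn_diffOn m hopen hf
    rw [radDn_succ', radDn_succ']
    have hev : (radDn m (fun y => c * f (L y))) =ᶠ[nhds z] (fun y => c * radDn m f (L y)) := by
      filter_upwards [hopen.mem_nhds hz] with y hy
      exact ih y hy
    have e1 : fderiv ℂ (radDn m (fun y => c * f (L y))) z
        = fderiv ℂ (fun y => c * radDn m f (L y)) z := hev.fderiv_eq
    show fderiv ℂ (radDn m (fun y => c * f (L y))) z z
        = c * (fderiv ℂ (radDn m f) (L z)) (L z)
    rw [e1, fderiv_cmul_comp c L (hdiff.differentiableAt (hopen.mem_nhds hLz))]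
    simp

end AuxSec

section Aux2
variable {N : ℕ}

lemma isOpen_unitBall : IsOpen (unitBall N) := by rw [unitBall]; exact Metric.isOpen_ball

/-- The defining set of `evalNorm`. -/
def eSet (ν : ℝ → ℝ) (n : ℕ) (z : EN N) : Set ℝ :=
  {r | ∃ f : EN N → ℂ, MemHw ν n f ∧ growthNorm ν n f ≤ 1 ∧ r = ‖f z‖}

lemma evalNorm_def (ν : ℝ → ℝ) (n : ℕ) (z : EN N) : evalNorm ν n z = sSup (eSet ν n z) := rfl

lemma evalNorm_nonneg (ν : ℝ → ℝ) (n : ℕ) (z : EN N) : 0 ≤ evalNorm ν n z := by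
  rw [evalNorm_def]
  apply Real.sSup_nonneg
  rintro r ⟨f, _, _, rfl⟩
  exact norm_nonneg _

lemma growthSet_nonneg (ν : ℝ → ℝ) (hν : IsNormalWeight ν) (n : ℕ) (f : EN N → ℂ) :
    ∀ x ∈ growthSet ν n f, 0 ≤ x := by
  rintro _ ⟨z, hz, rfl⟩
  have h1 : (0:ℝ) < ν ‖z‖ :=
    hν.pos _ ⟨norm_nonneg z, mem_unitBall_iff.1 hz⟩
  exact mul_nonneg h1.le (norm_nonneg _)

lemma sSup_growthSet_nonneg (ν : ℝ → ℝ) (hν : IsNormalWeight ν) (n : ℕ) (f : EN N → ℂ) :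
    0 ≤ sSup (growthSet ν n f) :=
  Real.sSup_nonneg (growthSet_nonneg ν hν n f)

/-- Comparison property of a normal weight. -/
lemma weight_transfer {ν : ℝ → ℝ} (hν : IsNormalWeight ν) :
    ∃ K : ℝ, 1 ≤ K ∧ ∀ t u : ℝ, 0 ≤ u → u ≤ t → t < 1 → ν t ≤ K * ν u := by
  obtain ⟨δ, a, b, hδ0, hδ1, ha, hab, hanti, _, _, _⟩ := hν.exists_params
  have hsub : Set.Icc (0:ℝ) δ ⊆ Set.Ico (0:ℝ) 1 :=
    fun x hx => ⟨hx.1, lt_of_le_of_lt hx.2 hδ1⟩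
  have hcont : ContinuousOn ν (Set.Icc (0:ℝ) δ) := hν.cont.mono hsub
  have hne : (Set.Icc (0:ℝ) δ).Nonempty := ⟨0, le_refl 0, hδ0⟩
  obtain ⟨tmin, htminm, htmin⟩ := isCompact_Icc.exists_isMinOn hne hcont
  obtain ⟨tmax, htmaxm, htmax⟩ := isCompact_Icc.exists_isMaxOn hne hcont
  have hm : 0 < ν tmin := hν.pos _ (hsub htminm)
  have hMm : ν tmin ≤ ν tmax := isMaxOn_iff.1 htmax _ htminm
  -- ν is essentially decreasing on [δ, 1)
  have hdec : ∀ x y : ℝ, δ ≤ x → x ≤ y → y < 1 → ν y ≤ ν x := by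
    intro x y hx hxy hy
    have hxm : x ∈ Set.Ico δ 1 := ⟨hx, lt_of_le_of_lt hxy hy⟩
    have hym : y ∈ Set.Ico δ 1 := ⟨le_trans hx hxy, hy⟩
    have h1 := hanti hxm hym hxy
    have hx1 : (0:ℝ) < (1 - x) ^ a := Real.rpow_pos_of_pos (by linarith [hxm.2]) a
    have hy1 : (0:ℝ) < (1 - y) ^ a := Real.rpow_pos_of_pos (by linarith) a
    rw [div_le_div_iff₀ hy1 hx1] at h1
    have h2 : (1 - y) ^ a ≤ (1 - x) ^ a :=
      Real.rpow_le_rpow (by linarith) (by linarith) ha.le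
    have h3 : ν y * (1 - x) ^ a ≤ ν x * (1 - x) ^ a := by
      calc ν y * (1 - x) ^ a ≤ ν x * (1 - y) ^ a := h1
        _ ≤ ν x * (1 - x) ^ a := by
            have hνx : 0 ≤ ν x := (hν.pos _ (Set.mem_Ico.2 ⟨le_trans hδ0 hx, hxm.2⟩)).le
            exact mul_le_mul_of_nonneg_left h2 hνx
    exact le_of_mul_le_mul_right h3 hx1
  refine ⟨max 1 (ν tmax / ν tmin), le_max_left _ _, ?_⟩
  intro t u hu hut ht1
  have hνu : 0 < ν u := hν.pos _ ⟨hu, lt_of_le_of_lt hut ht1⟩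
  have hνt : 0 < ν t := hν.pos _ ⟨le_trans hu hut, ht1⟩
  have hKey : ν t ≤ (max 1 (ν tmax / ν tmin)) * ν u := by
    rcases le_or_gt t δ with htδ | htδ
    · -- both ≤ δ
      have h1 : ν t ≤ ν tmax := isMaxOn_iff.1 htmax _ ⟨le_trans hu hut, htδ⟩
      have h2 : ν tmin ≤ ν u := isMinOn_iff.1 htmin _ ⟨hu, le_trans hut htδ⟩
      have h3 : ν t ≤ (ν tmax / ν tmin) * ν u := by
        rw [div_mul_eq_mul_div, le_div_iff₀ hm]
        calc ν t * ν tmin ≤ ν tmax * ν tmin := by nlinarith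
          _ ≤ ν tmax * ν u := by nlinarith
      exact le_trans h3 (mul_le_mul_of_nonneg_right (le_max_right _ _) hνu.le)
    · rcases le_or_gt δ u with huδ | huδ
      · -- both ≥ δ
        have h1 : ν t ≤ ν u := hdec u t huδ hut ht1
        calc ν t ≤ ν u := h1
          _ ≤ (max 1 (ν tmax / ν tmin)) * ν u := le_mul_of_one_le_left hνu.le (le_max_left _ _)
      · -- u < δ < t
        have h1 : ν t ≤ ν δ := hdec δ t (le_refl δ) htδ.le ht1
        have h2 : ν δ ≤ ν tmax := isMaxOn_iff.1 htmax _ ⟨hδ0, le_refl δ⟩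
        have h3 : ν tmin ≤ ν u := isMinOn_iff.1 htmin _ ⟨hu, huδ.le⟩
        have h4 : ν t ≤ (ν tmax / ν tmin) * ν u := by
          rw [div_mul_eq_mul_div, le_div_iff₀ hm]
          nlinarith
        exact le_trans h4 (mul_le_mul_of_nonneg_right (le_max_right _ _) hνu.le)
  exact hKey

/-- One-step descent : a sup bound on `radD g` on a ball of radius `ρ` bounds the variation
of `g` there. -/
lemma descent {g : EN N → ℂ} (hg : DifferentiableOn ℂ g (unitBall N)) {ρ A : ℝ}
    (hρ1 : ρ ≤ 1) (hA0 : 0 ≤ A)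
    (hA : ∀ z : EN N, ‖z‖ < ρ → ‖radD g z‖ ≤ A) {w : EN N} (hw : ‖w‖ < ρ) :
    ‖g w - g 0‖ ≤ A := by
  rcases eq_or_ne w 0 with rfl | hw0
  · simpa using hA0
  have hnw : 0 < ‖w‖ := norm_pos_iff.2 hw0
  have hρ0 : 0 < ρ := lt_trans hnw hw
  set ρ₀ : ℝ := ρ / ‖w‖ with hρ₀def
  have hρ₀1 : 1 < ρ₀ := (one_lt_div hnw).2 hw
  have hρ₀0 : 0 < ρ₀ := lt_trans one_pos hρ₀1
  have hmem : ∀ lam : ℂ, lam ∈ Metric.ball (0:ℂ) ρ₀ → (lam • w ∈ unitBall N ∧ ‖lam • w‖ < ρ) := by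
    intro lam hlam
    rw [mem_ball_zero_iff] at hlam
    have h1 : ‖lam • w‖ < ρ := by
      rw [norm_smul]
      calc ‖lam‖ * ‖w‖ < ρ₀ * ‖w‖ := by exact mul_lt_mul_of_pos_right hlam hnw
        _ = ρ := by rw [hρ₀def]; field_simp
    exact ⟨mem_unitBall_iff.2 (lt_of_lt_of_le h1 hρ1), h1⟩
  set u : ℂ → ℂ := fun lam => radD g (lam • w) with hu
  have hrad : DifferentiableOn ℂ (radD g) (unitBall N) := radD_diffOn isOpen_unitBall hg
  have hud : DifferentiableOn ℂ u (Metric.ball (0:ℂ) ρ₀) := by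
    intro lam hlam
    have h1 : DifferentiableWithinAt ℂ (fun lam : ℂ => lam • w) (Metric.ball (0:ℂ) ρ₀) lam :=
      (differentiableAt_id.smul_const w).differentiableWithinAt
    exact ((hrad.differentiableAt (isOpen_unitBall.mem_nhds
      (hmem lam hlam).1)).comp_differentiableWithinAt lam h1)
  have hu0 : u 0 = 0 := by rw [hu]; simp only [zero_smul]; exact radD_at_zero g
  refine le_of_forall_pos_le_add ?_
  intro ε hε
  have humaps : Set.MapsTo u (Metric.ball (0:ℂ) ρ₀) (Metric.ball (u 0) (A + ε)) := by
    intro lam hlam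
    rw [Metric.mem_ball, hu0, dist_zero_right]
    exact lt_of_le_of_lt (hA _ (hmem lam hlam).2) (by linarith)
  have hschwarz : ∀ lam : ℂ, lam ∈ Metric.ball (0:ℂ) ρ₀ →
      ‖u lam‖ ≤ (A + ε) / ρ₀ * ‖lam‖ := by
    intro lam hlam
    have := Complex.dist_le_div_mul_dist_of_mapsTo_ball hud (humaps.mono_right Metric.ball_subset_closedBall) hlam
    rwa [hu0, dist_zero_right, dist_zero_right] at this
  -- FTC along the segment
  set G : ℝ → ℂ := fun t => g (t • w) with hG
  have hker : ∀ t : ℝ, t ∈ Set.Icc (0:ℝ) 1 → (t • w ∈ unitBall N) := by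
    intro t ht
    rw [mem_unitBall_iff, norm_smul, Real.norm_eq_abs, abs_of_nonneg ht.1]
    calc t * ‖w‖ ≤ 1 * ‖w‖ := mul_le_mul_of_nonneg_right ht.2 (norm_nonneg _)
      _ = ‖w‖ := one_mul _
      _ < 1 := lt_of_lt_of_le hw hρ1
  have hG' : ∀ t ∈ Set.uIcc (0:ℝ) 1, HasDerivAt G ((fderiv ℂ g (t • w)) w) t := by
    intro t ht
    rw [Set.uIcc_of_le (zero_le_one)] at ht
    have hdg : HasFDerivAt g (fderiv ℂ g (t • w)) (t • w) :=
      (hg.differentiableAt (isOpen_unitBall.mem_nhds (hker t ht))).hasFDerivAt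
    have hpath : HasDerivAt (fun s : ℝ => s • w) w t := by
      simpa using (hasDerivAt_id t).smul_const w
    have := (hdg.restrictScalars ℝ).comp_hasDerivAt t hpath
    exact this
  have hcontG' : ContinuousOn (fun t : ℝ => (fderiv ℂ g (t • w)) w) (Set.uIcc (0:ℝ) 1) := by
    rw [Set.uIcc_of_le (zero_le_one)]
    have h1 : ContinuousOn (fderiv ℂ g) (unitBall N) := (reg isOpen_unitBall hg).continuousOn
    have h2 : ContinuousOn (fun t : ℝ => fderiv ℂ g (t • w)) (Set.Icc (0:ℝ) 1) :=
      h1.comp ((continuous_id.smul continuous_const).continuousOn) hker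
    exact (ContinuousLinearMap.apply ℂ ℂ w).continuous.comp_continuousOn h2
  have hInt : IntervalIntegrable (fun t : ℝ => (fderiv ℂ g (t • w)) w) volume 0 1 :=
    hcontG'.intervalIntegrable
  have hFTC : ∫ t in (0:ℝ)..1, (fderiv ℂ g (t • w)) w = G 1 - G 0 :=
    intervalIntegral.integral_eq_sub_of_hasDerivAt hG' hInt
  have hbd : ∀ t ∈ Set.uIoc (0:ℝ) 1, ‖(fderiv ℂ g (t • w)) w‖ ≤ (A + ε) * ‖w‖ / ρ := by
    intro t ht
    rw [Set.uIoc_of_le (zero_le_one)] at ht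
    have ht0 : 0 < t := ht.1
    have hlam : ((t:ℂ)) ∈ Metric.ball (0:ℂ) ρ₀ := by
      rw [mem_ball_zero_iff]
      simp only [Complex.norm_real, Real.norm_eq_abs, abs_of_pos ht0]
      exact lt_of_le_of_lt ht.2 hρ₀1
    have hcoe : ((t:ℂ)) • w = t • w := by
      rw [Complex.coe_smul]
    have huval : u ((t:ℂ)) = (t:ℂ) * (fderiv ℂ g (t • w)) w := by
      rw [hu]
      show radD g (((t:ℂ)) • w) = _
      rw [hcoe]
      show (fderiv ℂ g (t • w)) (((t:ℂ)) • w) = _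
      rw [ContinuousLinearMap.map_smul, smul_eq_mul]
    have h2 := hschwarz _ hlam
    rw [huval, norm_mul] at h2
    have hnt : ‖((t:ℂ))‖ = t := by
      simp [Complex.norm_real, abs_of_pos ht0]
    rw [hnt] at h2
    have h3 : ‖(fderiv ℂ g (t • w)) w‖ ≤ (A + ε) / ρ₀ := by
      have := le_of_mul_le_mul_left (by linarith [mul_comm ((A + ε) / ρ₀) t] : t * ‖(fderiv ℂ g (t • w)) w‖ ≤ t * ((A + ε) / ρ₀)) ht0
      exact this
    calc ‖(fderiv ℂ g (t • w)) w‖ ≤ (A + ε) / ρ₀ := h3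
      _ = (A + ε) * ‖w‖ / ρ := by rw [hρ₀def, div_div_eq_mul_div]
  have hnorm := intervalIntegral.norm_integral_le_of_norm_le_const hbd
  rw [hFTC] at hnorm
  have hG1 : G 1 = g w := by rw [hG]; simp
  have hG0 : G 0 = g 0 := by rw [hG]; simp
  rw [hG1, hG0] at hnorm
  have h4 : (A + ε) * ‖w‖ / ρ * |1 - 0| ≤ A + ε := by
    rw [show |(1:ℝ) - 0| = 1 by norm_num, mul_one, div_le_iff₀ hρ0]
    nlinarith
  linarith [hnorm, h4]

/-- Point evaluations are bounded on `H_ν^{(n)}`. -/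
lemma eSet_bddAbove {ν : ℝ → ℝ} (hν : IsNormalWeight ν) {n : ℕ} (hn : 1 ≤ n)
    {w : EN N} (hw : w ∈ unitBall N) : BddAbove (eSet ν n w) := by
  set ρ : ℝ := (‖w‖ + 1) / 2 with hρdef
  have hwb : ‖w‖ < 1 := mem_unitBall_iff.1 hw
  have hwρ : ‖w‖ < ρ := by rw [hρdef]; linarith
  have hρ1 : ρ < 1 := by rw [hρdef]; linarith
  have hρ0 : 0 < ρ := by rw [hρdef]; positivity
  have hsub : Set.Icc (0:ℝ) ρ ⊆ Set.Ico (0:ℝ) 1 :=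
    fun x hx => ⟨hx.1, lt_of_le_of_lt hx.2 hρ1⟩
  obtain ⟨t₀, ht₀m, ht₀⟩ := isCompact_Icc.exists_isMinOn ⟨0, le_refl 0, hρ0.le⟩
    (hν.cont.mono hsub)
  have hνt₀ : 0 < ν t₀ := hν.pos _ (hsub ht₀m)
  set A : ℝ := 1 / ν t₀ with hAdef
  have hA0 : 0 ≤ A := by rw [hAdef]; positivity
  refine ⟨1 + A, ?_⟩
  rintro r ⟨f, hfm, hfn, rfl⟩
  have hSup1 : sSup (growthSet ν n f) ≤ 1 := by
    have h1 : 0 ≤ ‖f 0‖ := norm_nonneg _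
    rw [growthNorm] at hfn
    linarith
  have htop : ∀ z : EN N, ‖z‖ < ρ → ‖radDn n f z‖ ≤ A := by
    intro z hz
    have hzb : z ∈ unitBall N := mem_unitBall_iff.2 (lt_of_lt_of_le hz hρ1.le)
    have h1 : ν ‖z‖ * ‖radDn n f z‖ ≤ 1 :=
      le_trans (le_csSup hfm.2 ⟨z, hzb, rfl⟩) hSup1
    have h2 : ν t₀ ≤ ν ‖z‖ := isMinOn_iff.1 ht₀ _ ⟨norm_nonneg z, hz.le⟩
    have h3 : 0 < ν ‖z‖ := lt_of_lt_of_le hνt₀ h2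
    rw [hAdef]
    rw [le_div_iff₀ hνt₀]
    have h4 : ‖radDn n f z‖ * ν t₀ ≤ ‖radDn n f z‖ * ν ‖z‖ :=
      mul_le_mul_of_nonneg_left h2 (norm_nonneg _)
    calc ‖radDn n f z‖ * ν t₀ ≤ ‖radDn n f z‖ * ν ‖z‖ := h4
      _ = ν ‖z‖ * ‖radDn n f z‖ := mul_comm _ _
      _ ≤ 1 := h1
  have chain : ∀ i : ℕ, i ≤ n → ∀ z : EN N, ‖z‖ < ρ →
      ‖radDn (n - i) f z - radDn (n - i) f 0‖ ≤ A := by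
    intro i
    induction i with
    | zero =>
        intro _ z hz
        rw [Nat.sub_zero, radDn_at_zero hn, sub_zero]
        exact htop z hz
    | succ k ih =>
        intro hkn z hz
        have hk : k ≤ n := le_of_lt (Nat.lt_of_succ_le hkn)
        rcases Nat.eq_zero_or_pos (n - k) with h0 | hposnk
        · have he : n - (k+1) = n - k := by omega
          rw [he]
          exact ih hk z hz
        · obtain ⟨m, hm⟩ : ∃ m, n - k = m + 1 :=
            ⟨n - k - 1, by omega⟩
          have he : n - (k+1) = m := by omega
          rw [he]
          have hAm : ∀ y : EN N, ‖y‖ < ρ → ‖radD (radDn m f) y‖ ≤ A := by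
            intro y hy
            have h5 := ih hk y hy
            rw [hm, radDn_at_zero (by omega : 1 ≤ m + 1), sub_zero, radDn_succ'] at h5
            exact h5
          exact descent (radDn_diffOn m isOpen_unitBall hfm.1) hρ1.le hA0 hAm hz
  have hfinal := chain n (le_refl n) w hwρ
  rw [Nat.sub_self] at hfinal
  have hfw : ‖f w - f 0‖ ≤ A := hfinal
  have hf0 : ‖f 0‖ ≤ 1 := by
    have := sSup_growthSet_nonneg ν hν n f
    rw [growthNorm] at hfn
    linarith
  calc ‖f w‖ = ‖(f w - f 0) + f 0‖ := by ring_nf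
    _ ≤ ‖f w - f 0‖ + ‖f 0‖ := norm_add_le _ _
    _ ≤ A + 1 := add_le_add hfw hf0
    _ = 1 + A := add_comm _ _

/-- Transfer of point-evaluation norms along contractions. -/
lemma transfer {ν : ℝ → ℝ} (hν : IsNormalWeight ν) {K : ℝ} (hK1 : 1 ≤ K)
    (hKt : ∀ t u : ℝ, 0 ≤ u → u ≤ t → t < 1 → ν t ≤ K * ν u)
    {n : ℕ} (hn : 1 ≤ n) {w w' : EN N} (hw : w ∈ unitBall N) (hle : ‖w'‖ ≤ ‖w‖) :
    evalNorm ν n w' ≤ K * evalNorm ν n w := by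
  have hK0 : (0:ℝ) < K := lt_of_lt_of_le one_pos hK1
  have hbdd : BddAbove (eSet ν n w) := eSet_bddAbove hν hn hw
  rw [evalNorm_def]
  apply Real.sSup_le _ (mul_nonneg hK0.le (evalNorm_nonneg ν n w))
  rintro r ⟨f, hfm, hfn, rfl⟩
  obtain ⟨L, hLc, hLw⟩ : ∃ L : EN N →L[ℂ] EN N, (∀ x, ‖L x‖ ≤ ‖x‖) ∧ L w = w' := by
    rcases eq_or_ne w 0 with rfl | hw0
    · have hw'0 : w' = 0 := norm_le_zero_iff.1 (by simpa using hle)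
      exact ⟨0, by simp, by simp [hw'0]⟩
    · have hw0' : 0 < ‖w‖ := norm_pos_iff.2 hw0
      refine ⟨(innerSL ℂ w).smulRight ((((‖w‖:ℂ))^2)⁻¹ • w'), ?_, ?_⟩
      · intro x
        rw [ContinuousLinearMap.smulRight_apply, norm_smul, norm_smul]
        have hi : ‖(innerSL ℂ w) x‖ ≤ ‖w‖ * ‖x‖ := by
          rw [innerSL_apply_apply]
          exact norm_inner_le_norm _ _
        have hn2 : ‖((((‖w‖:ℂ)))^2)⁻¹‖ = (‖w‖^2)⁻¹ := by
          rw [norm_inv, norm_pow, Complex.norm_real, Real.norm_eq_abs, abs_norm]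
        rw [hn2]
        calc ‖(innerSL ℂ w) x‖ * ((‖w‖^2)⁻¹ * ‖w'‖)
            ≤ (‖w‖ * ‖x‖) * ((‖w‖^2)⁻¹ * ‖w‖) := by
              refine mul_le_mul hi ?_ (by positivity) (by positivity)
              exact mul_le_mul_of_nonneg_left hle (by positivity)
          _ = ‖x‖ := by field_simp
      · have hne : (((‖w‖:ℂ)))^2 ≠ 0 := pow_ne_zero 2 (Complex.ofReal_ne_zero.2 hw0'.ne')
        have h9 : (innerSL ℂ w) w = ((‖w‖:ℂ))^2 := by
          rw [innerSL_apply_apply, inner_self_eq_norm_sq_to_K]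
          norm_cast
        rw [ContinuousLinearMap.smulRight_apply, h9, smul_smul,
          mul_inv_cancel₀ hne, one_smul]
  have hLball : ∀ y, y ∈ unitBall N → L y ∈ unitBall N := by
    intro y hy
    exact mem_unitBall_iff.2 (lt_of_le_of_lt (hLc y) (mem_unitBall_iff.1 hy))
  set g : EN N → ℂ := fun y => ((K:ℂ))⁻¹ * f (L y) with hg
  have hgd : DifferentiableOn ℂ g (unitBall N) := by
    intro y hy
    have h1 : DifferentiableWithinAt ℂ (fun y => f (L y)) (unitBall N) y :=
      ((hfm.1.differentiableAt (isOpen_unitBall.mem_nhds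
        (hLball y hy))).comp_differentiableWithinAt y
        (L.differentiable.differentiableAt.differentiableWithinAt))
    exact h1.const_mul _
  have hcomp := radDn_comp ((K:ℂ))⁻¹ L hLc hfm.1 n
  have hnormK : ‖((K:ℂ))⁻¹‖ = K⁻¹ := by
    rw [norm_inv, Complex.norm_real, Real.norm_eq_abs, abs_of_pos hK0]
  have hgel : ∀ x ∈ growthSet ν n g, x ≤ sSup (growthSet ν n f) := by
    rintro _ ⟨z, hz, rfl⟩
    dsimp only
    have hc : radDn n g z = ((K:ℂ))⁻¹ * radDn n f (L z) := hcomp z hz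
    rw [hc, norm_mul, hnormK]
    have hLz := hLball z hz
    have hw1 : ν ‖z‖ ≤ K * ν ‖L z‖ :=
      hKt ‖z‖ ‖L z‖ (norm_nonneg _) (hLc z) (mem_unitBall_iff.1 hz)
    have hx0 : (0:ℝ) ≤ ‖radDn n f (L z)‖ := norm_nonneg _
    have hν0 : (0:ℝ) < ν ‖L z‖ := hν.pos _ ⟨norm_nonneg _, mem_unitBall_iff.1 hLz⟩
    have h6 : ν ‖z‖ * (K⁻¹ * ‖radDn n f (L z)‖) ≤ ν ‖L z‖ * ‖radDn n f (L z)‖ := by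
      have h7 : ν ‖z‖ * K⁻¹ ≤ ν ‖L z‖ := by
        have h8 := mul_le_mul_of_nonneg_right hw1 (inv_nonneg.2 hK0.le)
        have hKK : K * ν ‖L z‖ * K⁻¹ = ν ‖L z‖ := by field_simp
        linarith
      calc ν ‖z‖ * (K⁻¹ * ‖radDn n f (L z)‖) = (ν ‖z‖ * K⁻¹) * ‖radDn n f (L z)‖ := by ring
        _ ≤ ν ‖L z‖ * ‖radDn n f (L z)‖ := mul_le_mul_of_nonneg_right h7 hx0
    exact le_trans h6 (le_csSup hfm.2 ⟨L z, hLz, rfl⟩)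
  have hbddg : BddAbove (growthSet ν n g) := ⟨sSup (growthSet ν n f), hgel⟩
  have hgn : growthNorm ν n g ≤ 1 := by
    have h1 : ‖g 0‖ = K⁻¹ * ‖f 0‖ := by
      have he : g 0 = ((K:ℂ))⁻¹ * f (L 0) := rfl
      rw [he, L.map_zero, norm_mul, hnormK]
    have h2 : sSup (growthSet ν n g) ≤ sSup (growthSet ν n f) :=
      Real.sSup_le hgel (sSup_growthSet_nonneg ν hν n f)
    have h3 : K⁻¹ * ‖f 0‖ ≤ ‖f 0‖ := by
      have : K⁻¹ ≤ 1 := by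
        rw [inv_le_one_iff₀]; right; exact hK1
      nlinarith [norm_nonneg (f 0)]
    rw [growthNorm, h1]
    rw [growthNorm] at hfn
    linarith
  have hmem : ‖g w‖ ∈ eSet ν n w := ⟨g, ⟨hgd, hbddg⟩, hgn, rfl⟩
  have h5 : ‖g w‖ ≤ evalNorm ν n w := le_csSup hbdd hmem
  have h6 : ‖f w'‖ = K * ‖g w‖ := by
    have he : g w = ((K:ℂ))⁻¹ * f (L w) := rfl
    rw [he, hLw, norm_mul, hnormK]
    field_simp
  rw [h6]
  exact mul_le_mul_of_nonneg_left h5 hK0.le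

/-- Schwarz lemma for self-maps of the ball fixing the origin. -/
lemma schwarz_phi {φ : EN N → EN N} (hφ : φ ∈ SelfMapB N) (h0 : φ 0 = 0)
    {z : EN N} (hz : z ∈ unitBall N) : ‖φ z‖ ≤ ‖z‖ := by
  rcases eq_or_ne z 0 with rfl | hz0
  · simp [h0]
  have hnz : 0 < ‖z‖ := norm_pos_iff.2 hz0
  set a : EN N := (((‖z‖:ℂ)))⁻¹ • z with ha
  have hna : ‖a‖ = 1 := by
    rw [ha, norm_smul, norm_inv, Complex.norm_real, Real.norm_eq_abs, abs_of_pos hnz]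
    field_simp
  set Φ : ℂ → EN N := fun lam => φ (lam • a) with hΦ
  have hmapball : ∀ lam : ℂ, lam ∈ Metric.ball (0:ℂ) 1 → lam • a ∈ unitBall N := by
    intro lam hlam
    rw [mem_ball_zero_iff] at hlam
    rw [mem_unitBall_iff, norm_smul, hna, mul_one]
    exact hlam
  have hdΦ : DifferentiableOn ℂ Φ (Metric.ball (0:ℂ) 1) := by
    intro lam hlam
    have h1 : DifferentiableWithinAt ℂ (fun lam : ℂ => lam • a) (Metric.ball (0:ℂ) 1) lam :=
      (differentiableAt_id.smul_const a).differentiableWithinAt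
    have h2 : unitBall N ∈ nhds (lam • a) := isOpen_unitBall.mem_nhds (hmapball lam hlam)
    exact (hφ.1.differentiableAt h2).comp_differentiableWithinAt lam h1
  have hΦ0 : Φ 0 = 0 := by rw [hΦ]; simp [h0]
  have hmaps : Set.MapsTo Φ (Metric.ball (0:ℂ) 1) (Metric.ball (Φ 0) 1) := by
    intro lam hlam
    rw [hΦ0, Metric.mem_ball, dist_zero_right]
    have := hφ.2 (hmapball lam hlam)
    rw [mem_unitBall_iff] at this
    exact this
  have hlamz : ((‖z‖:ℂ)) ∈ Metric.ball (0:ℂ) 1 := by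
    rw [mem_ball_zero_iff, Complex.norm_real, Real.norm_eq_abs, abs_of_pos hnz]
    exact mem_unitBall_iff.1 hz
  have h3 := Complex.dist_le_div_mul_dist_of_mapsTo_ball hdΦ (hmaps.mono_right Metric.ball_subset_closedBall) hlamz
  have h4 : Φ ((‖z‖:ℂ)) = φ z := by
    rw [hΦ]
    simp only []
    rw [ha, smul_smul, mul_inv_cancel₀ (by exact_mod_cast hnz.ne' : ((‖z‖:ℂ)) ≠ 0), one_smul]
  rw [h4, hΦ0, dist_zero_right, dist_zero_right, Complex.norm_real, Real.norm_eq_abs,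
    abs_of_pos hnz] at h3
  calc ‖φ z‖ ≤ 1 / 1 * ‖z‖ := h3
    _ = ‖z‖ := by ring

end Aux2

/-- Lemma on `S_p^*(B)`: if `φ ∈ S_p^*(B)`, `φ(0)=0` and
`M_p^j = sup_w h(w)‖δ_{φ_p(w)}^{H_ν^{(j)}}‖ < ∞`, then
`sup_z h(z)‖δ_{φ(z)}^{H_ν^{(j)}}‖ ≤ C_j M_p^j`. -/
theorem stmt_4 {N : ℕ} (p : Fin N) (ν : ℝ → ℝ) (hν : IsNormalWeight ν)
    (h : EN N → ℝ)
    (hpos : ∀ z ∈ unitBall N, 0 < h z)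
    (hbdd : ∃ M : ℝ, ∀ z ∈ unitBall N, h z ≤ M)
    (hliminf : ∃ c > (0:ℝ), ∃ r < (1:ℝ), ∀ z ∈ unitBall N, r < ‖z‖ → c ≤ h z)
    (j : ℕ) (hj : 1 ≤ j)
    (φ : EN N → EN N) (hφ : φ ∈ starS p) (hφ0 : φ 0 = 0)
    (hM : BddAbove
      ((fun w => h w * evalNorm ν j ((φ w p) • EuclideanSpace.single p (1:ℂ))) ''
        unitBall N)) :
    ∃ C > (0:ℝ), ∀ z ∈ unitBall N,
      h z * evalNorm ν j (φ z) ≤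
        C * sSup ((fun w => h w * evalNorm ν j ((φ w p) • EuclideanSpace.single p (1:ℂ))) ''
          unitBall N) := by
  obtain ⟨Mb, hMb⟩ := hbdd
  obtain ⟨c, hc, r, hr, hcl⟩ := hliminf
  obtain ⟨K, hK1, hKt⟩ := weight_transfer hν
  have h0b : (0:EN N) ∈ unitBall N := mem_unitBall_iff.2 (by simp)
  have hMb0 : 0 < Mb := lt_of_lt_of_le (hpos 0 h0b) (hMb 0 h0b)
  have hK0 : 0 < K := lt_of_lt_of_le one_pos hK1
  set S := sSup ((fun w => h w * evalNorm ν j ((φ w p) • EuclideanSpace.single p (1:ℂ))) ''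
    unitBall N) with hSdef
  have hS0 : 0 ≤ S := by
    rw [hSdef]
    apply Real.sSup_nonneg
    rintro _ ⟨w, hwb, rfl⟩
    exact mul_nonneg (hpos w hwb).le (evalNorm_nonneg ν j _)
  refine ⟨Mb * K / c, by positivity, ?_⟩
  intro z hz
  have hφz : φ z ∈ unitBall N := hφ.1.2 hz
  obtain ⟨r₁, hr₁def⟩ : ∃ x : ℝ, x = max r 0 := ⟨_, rfl⟩
  have hr₁1 : r₁ < 1 := by rw [hr₁def]; exact max_lt hr one_pos
  obtain ⟨lam, hlamdef⟩ : ∃ x : ℝ, x = max ‖φ z‖ ((r₁+1)/2) := ⟨_, rfl⟩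
  have hs₁1 : (r₁+1)/2 < 1 := by linarith
  have hlam1 : lam < 1 := by rw [hlamdef]; exact max_lt (mem_unitBall_iff.1 hφz) hs₁1
  have hr₁0 : (0:ℝ) ≤ r₁ := by rw [hr₁def]; exact le_max_right r 0
  have hlamlow : (r₁+1)/2 ≤ lam := by rw [hlamdef]; exact le_max_right _ _
  have hlampos : 0 < lam := by linarith
  have hlamr : r < lam := by
    have h1 : r ≤ r₁ := by rw [hr₁def]; exact le_max_left r 0
    linarith
  have hnlam : ‖((lam:ℝ) : ℂ)‖ = lam := by
    rw [Complex.norm_real, Real.norm_eq_abs, abs_of_pos hlampos]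
  obtain ⟨z', hz'b, hφz'⟩ := hφ.2 ((lam : ℂ)) (by rw [hnlam]; exact hlam1)
  have hnφz' : ‖φ z'‖ = lam := by
    rw [hφz', norm_smul, hnlam]
    simp
  have hz'r : r < ‖z'‖ := by
    have hsch := schwarz_phi hφ.1 hφ0 hz'b
    rw [hnφz'] at hsch
    exact lt_of_lt_of_le hlamr hsch
  have hhz' : c ≤ h z' := hcl z' hz'b hz'r
  have hφz'p : φ z' p = (lam : ℂ) := by
    rw [hφz']
    simp [EuclideanSpace.single_apply]
  have hSel : h z' * evalNorm ν j ((φ z' p) • EuclideanSpace.single p (1:ℂ)) ≤ S :=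
    le_csSup hM ⟨z', hz'b, rfl⟩
  rw [hφz'p] at hSel
  have hE0 : 0 ≤ evalNorm ν j ((lam:ℂ) • EuclideanSpace.single p (1:ℂ)) :=
    evalNorm_nonneg ν j _
  have hE1 : evalNorm ν j ((lam:ℂ) • EuclideanSpace.single p (1:ℂ)) ≤ S / c := by
    rw [le_div_iff₀ hc]
    nlinarith
  have hnw : ‖((lam:ℂ)) • EuclideanSpace.single p (1:ℂ)‖ = lam := by
    rw [norm_smul, hnlam]; simp
  have hwmem : ((lam:ℂ)) • EuclideanSpace.single p (1:ℂ) ∈ unitBall N := by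
    rw [mem_unitBall_iff, hnw]; exact hlam1
  have hle2 : ‖φ z‖ ≤ ‖((lam:ℂ)) • EuclideanSpace.single p (1:ℂ)‖ := by
    rw [hnw, hlamdef]; exact le_max_left _ _
  have htr := transfer hν hK1 hKt hj hwmem hle2
  have hhz : h z ≤ Mb := hMb z hz
  have hEφ : 0 ≤ evalNorm ν j (φ z) := evalNorm_nonneg ν j _
  calc h z * evalNorm ν j (φ z)
      ≤ Mb * evalNorm ν j (φ z) := mul_le_mul_of_nonneg_right hhz hEφ
    _ ≤ Mb * (K * evalNorm ν j ((lam:ℂ) • EuclideanSpace.single p (1:ℂ))) :=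
        mul_le_mul_of_nonneg_left htr hMb0.le
    _ ≤ Mb * (K * (S / c)) := by
        refine mul_le_mul_of_nonneg_left ?_ hMb0.le
        exact mul_le_mul_of_nonneg_left hE1 hK0.le
    _ = Mb * K / c * S := by field_simp
end

section
/- Let ν be a normal weight on B, and let h : B → (0,∞) be a bounded function with liminf_{|z|→1} h(z) > 0. Let α ∈ B∖{0} and let γ = γ_α be the Möbius automorphism of B, with p-th component γ_p. Let j ≥ 1 be an integer and p ∈ {1,…,N} be such that M_p^{j*} := sup_{w∈B} h(w)·‖δ_{w_p}^{H_ν^{(j)}}‖ < ∞ (w_p being the p-th coordinate of w). Then there exists a constant C_{p,j} > 0 such that sup_{z∈B} h(z)·‖δ_{γ_p(z)}^{H_ν^{(j)}}‖ ≤ C_{p,j} · M_p^{j*}. -/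
open scoped BigOperators ComplexConjugate
open MeasureTheory Filter Set

open scoped InnerProductSpace

noncomputable section Aux

namespace Stmt5Aux

/-! ### generalities -/

lemma zero_mem_unitBall (N : ℕ) : (0 : EN N) ∈ unitBall N := by
  simp [unitBall]

lemma mem_unitBall_iff {N : ℕ} {z : EN N} : z ∈ unitBall N ↔ ‖z‖ < 1 := by
  simp [unitBall]

lemma evalNorm_nonneg {N : ℕ} (ν : ℝ → ℝ) (j : ℕ) (ξ : EN N) : 0 ≤ evalNorm ν j ξ := by
  apply Real.sSup_nonneg
  rintro x ⟨f, -, -, rfl⟩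
  exact norm_nonneg _

lemma growth_bounds {N : ℕ} {ν : ℝ → ℝ} (hν : IsNormalWeight ν) {j : ℕ} {f : EN N → ℂ}
    (hf : MemHw ν j f) (hn : growthNorm ν j f ≤ 1) :
    ‖f 0‖ ≤ 1 ∧ ∀ z ∈ unitBall N, ν ‖z‖ * ‖radDn j f z‖ ≤ 1 := by
  have hge : ∀ x ∈ growthSet ν j f, 0 ≤ x := by
    rintro x ⟨z, hz, rfl⟩
    have hz1 : ‖z‖ < 1 := mem_unitBall_iff.mp hz
    exact mul_nonneg (hν.pos ‖z‖ ⟨norm_nonneg _, hz1⟩).le (norm_nonneg _)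
  have hmem0 : (fun z => ν ‖z‖ * ‖radDn j f z‖) 0 ∈ growthSet ν j f :=
    Set.mem_image_of_mem _ (zero_mem_unitBall N)
  have hsup0 : 0 ≤ sSup (growthSet ν j f) :=
    le_trans (hge _ hmem0) (le_csSup hf.2 hmem0)
  have hgn : growthNorm ν j f = ‖f 0‖ + sSup (growthSet ν j f) := rfl
  constructor
  · linarith [hgn ▸ hn]
  · intro z hz
    have h1 : ν ‖z‖ * ‖radDn j f z‖ ≤ sSup (growthSet ν j f) :=
      le_csSup hf.2 (Set.mem_image_of_mem _ hz)
    have h2 := norm_nonneg (f 0)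
    linarith [hgn ▸ hn]

/-- positive lower bound for a normal weight on a compact subinterval -/
lemma nu_min {ν : ℝ → ℝ} (hν : IsNormalWeight ν) {ρ : ℝ} (hρ0 : 0 ≤ ρ) (hρ1 : ρ < 1) :
    ∃ m > (0:ℝ), ∀ t ∈ Set.Icc (0:ℝ) ρ, m ≤ ν t := by
  have hsub : Set.Icc (0:ℝ) ρ ⊆ Set.Ico (0:ℝ) 1 := fun t ht => ⟨ht.1, lt_of_le_of_lt ht.2 hρ1⟩
  have hcont : ContinuousOn ν (Set.Icc (0:ℝ) ρ) := hν.cont.mono hsub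
  obtain ⟨t₀, ht₀, hmin⟩ := isCompact_Icc.exists_isMinOn ⟨0, Set.left_mem_Icc.mpr hρ0⟩ hcont
  exact ⟨ν t₀, hν.pos t₀ (hsub ht₀), fun t ht => hmin ht⟩

/-! ### 1D machinery -/

/-- The 1D radial-derivative operator. -/
def dd (v : ℂ → ℂ) : ℂ → ℂ := fun μ => μ * deriv v μ

lemma dd_analyticOnNhd {v : ℂ → ℂ} (hv : AnalyticOnNhd ℂ v (Metric.ball 0 1)) :
    AnalyticOnNhd ℂ (dd v) (Metric.ball 0 1) :=
  analyticOnNhd_id.mul hv.deriv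

lemma ddIter_analyticOnNhd {v : ℂ → ℂ} (hv : AnalyticOnNhd ℂ v (Metric.ball 0 1)) (k : ℕ) :
    AnalyticOnNhd ℂ (dd^[k] v) (Metric.ball 0 1) := by
  induction k with
  | zero => exact hv
  | succ k ih => rw [Function.iterate_succ_apply']; exact dd_analyticOnNhd ih

lemma ddIter_zero {v : ℂ → ℂ} {k : ℕ} (hk : 1 ≤ k) : dd^[k] v 0 = 0 := by
  obtain ⟨i, rfl⟩ : ∃ i, k = i + 1 := ⟨k - 1, by omega⟩
  rw [Function.iterate_succ_apply']
  simp [dd]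

/-- descent step: bound on `dd v` gives a bound on `v - v 0`. -/
lemma dd_descent {v : ℂ → ℂ} (hv : AnalyticOnNhd ℂ v (Metric.ball 0 1))
    {r₂ B : ℝ} (hr : 0 < r₂) (hr1 : r₂ < 1)
    (hB : ∀ μ ∈ Metric.closedBall (0:ℂ) r₂, ‖dd v μ‖ ≤ B) :
    ∀ μ ∈ Metric.closedBall (0:ℂ) r₂, ‖v μ - v 0‖ ≤ B := by
  have hB0 : 0 ≤ B := le_trans (norm_nonneg _) (hB 0 (Metric.mem_closedBall_self hr.le))
  have hcb : Metric.closedBall (0:ℂ) r₂ ⊆ Metric.ball 0 1 := by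
    intro w hw
    rw [Metric.mem_closedBall, dist_zero_right] at hw
    rw [Metric.mem_ball, dist_zero_right]
    linarith
  have hd : ∀ μ ∈ Metric.closedBall (0:ℂ) r₂, ‖deriv v μ‖ ≤ B / r₂ := by
    intro μ hμ
    apply Complex.norm_le_of_forall_mem_frontier_norm_le (Metric.isBounded_ball (x := (0:ℂ)) (r := r₂))
    · exact ⟨hv.deriv.differentiableOn.mono (Metric.ball_subset_ball hr1.le),
        (hv.deriv.continuousOn).mono (by rw [closure_ball (0:ℂ) hr.ne']; exact hcb)⟩
    · intro w hw
      rw [frontier_ball (0:ℂ) hr.ne'] at hw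
      have hwn : ‖w‖ = r₂ := by simpa [dist_zero_right] using hw
      have hw2 : w ∈ Metric.closedBall (0:ℂ) r₂ := by
        rw [Metric.mem_closedBall, dist_zero_right, hwn]
      have h1 : ‖w * deriv v w‖ ≤ B := hB w hw2
      rw [norm_mul, hwn] at h1
      rw [le_div_iff₀ hr]
      linarith [mul_comm (‖deriv v w‖) r₂]
    · rw [closure_ball (0:ℂ) hr.ne']; exact hμ
  intro μ hμ
  have hmvt : ‖v μ - v 0‖ ≤ (B / r₂) * ‖μ - 0‖ := by
    apply Convex.norm_image_sub_le_of_norm_deriv_le (f := v) (s := Metric.closedBall (0:ℂ) r₂)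
      (fun x hx => (hv x (hcb hx)).differentiableAt)
      hd (convex_closedBall _ _) (Metric.mem_closedBall_self hr.le) hμ
  have hμn : ‖μ - 0‖ ≤ r₂ := by
    rw [sub_zero, ← dist_zero_right]; exact Metric.mem_closedBall.mp hμ
  calc ‖v μ - v 0‖ ≤ (B / r₂) * ‖μ - 0‖ := hmvt
    _ ≤ (B / r₂) * r₂ := by
        apply mul_le_mul_of_nonneg_left hμn (by positivity)
    _ = B := by field_simp

/-! ### slice representation in the 1-dimensional case -/

section Slice

variable {N : ℕ} {p : Fin N} (hsub : ∀ i : Fin N, i = p)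

lemma coord_smul_single (μ : ℂ) : ((μ • EuclideanSpace.single p (1:ℂ)) : EN N) p = μ := by
  simp [EuclideanSpace.single_apply]

lemma norm_smul_single (μ : ℂ) : ‖((μ • EuclideanSpace.single p (1:ℂ)) : EN N)‖ = ‖μ‖ := by
  rw [norm_smul, EuclideanSpace.norm_single]
  simp

include hsub in
lemma eps_pi (z : EN N) : (z p) • EuclideanSpace.single p (1:ℂ) = z := by
  ext i
  rw [hsub i]
  simp [EuclideanSpace.single_apply]

include hsub in
lemma norm_coord (z : EN N) : ‖z‖ = ‖z p‖ := by
  conv_lhs => rw [← eps_pi hsub z]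
  exact norm_smul_single _

include hsub in
lemma slice_diff {f : EN N → ℂ} (hf : DifferentiableOn ℂ f (unitBall N)) :
    DifferentiableOn ℂ (fun μ : ℂ => f (μ • EuclideanSpace.single p (1:ℂ)))
      (Metric.ball 0 1) := by
  have hL : Differentiable ℂ (fun μ : ℂ => (μ • EuclideanSpace.single p (1:ℂ) : EN N)) :=
    (ContinuousLinearMap.toSpanSingleton ℂ (EuclideanSpace.single p (1:ℂ))).differentiable
  intro μ hμ
  have hmem : (μ • EuclideanSpace.single p (1:ℂ) : EN N) ∈ unitBall N := by
    rw [mem_unitBall_iff, norm_smul_single]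
    simpa [dist_zero_right] using hμ
  exact (hf _ hmem).comp μ (hL μ).differentiableWithinAt
    (fun w hw => by
      rw [mem_unitBall_iff, norm_smul_single]
      simpa [dist_zero_right] using hw)

include hsub in
lemma slice_radDn {f : EN N → ℂ} (hf : DifferentiableOn ℂ f (unitBall N)) (k : ℕ) :
    ∀ z ∈ unitBall N,
      radDn k f z = dd^[k] (fun μ : ℂ => f (μ • EuclideanSpace.single p (1:ℂ))) (z p) := by
  set g : ℂ → ℂ := fun μ : ℂ => f (μ • EuclideanSpace.single p (1:ℂ)) with hg
  have hganal : AnalyticOnNhd ℂ g (Metric.ball 0 1) :=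
    (slice_diff hsub hf).analyticOnNhd Metric.isOpen_ball
  induction k with
  | zero =>
    intro z hz
    show f z = g (z p)
    rw [hg]
    exact congrArg f (eps_pi hsub z).symm
  | succ k ih =>
    intro z hz
    have h1 : radDn (k+1) f z = radD (radDn k f) z := by
      show radD^[k+1] f z = _
      rw [Function.iterate_succ_apply']
      rfl
    rw [h1]
    have hEE : radDn k f =ᶠ[nhds z] (fun w : EN N => dd^[k] g (w p)) := by
      filter_upwards [Metric.isOpen_ball.mem_nhds hz] with w hw
      exact ih w hw
    have hzp : (z p) ∈ Metric.ball (0:ℂ) 1 := by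
      rw [Metric.mem_ball, dist_zero_right, ← norm_coord hsub z]
      exact mem_unitBall_iff.mp hz
    have hvd : HasDerivAt (dd^[k] g) (deriv (dd^[k] g) (z p)) (z p) :=
      ((ddIter_analyticOnNhd hganal k) (z p) hzp).differentiableAt.hasDerivAt
    have hπd : HasFDerivAt (fun w : EN N => w p) (EuclideanSpace.proj p : EN N →L[ℂ] ℂ) z :=
      (EuclideanSpace.proj p : EN N →L[ℂ] ℂ).hasFDerivAt
    have hcomp : HasFDerivAt (fun w : EN N => dd^[k] g (w p))
        ((deriv (dd^[k] g) (z p)) • (EuclideanSpace.proj p : EN N →L[ℂ] ℂ)) z :=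
      hvd.comp_hasFDerivAt z hπd
    have h2 : radD (radDn k f) z = fderiv ℂ (radDn k f) z z := rfl
    rw [h2, hEE.fderiv_eq, hcomp.fderiv]
    show (deriv (dd^[k] g) (z p)) • ((EuclideanSpace.proj p : EN N →L[ℂ] ℂ) z)
      = dd^[k+1] g (z p)
    rw [Function.iterate_succ_apply']
    show (deriv (dd^[k] g) (z p)) • (z p) = dd (dd^[k] g) (z p)
    rw [dd, smul_eq_mul, mul_comm]

include hsub in
/-- local boundedness of point evaluations (one-dimensional case) -/
lemma locBound {ν : ℝ → ℝ} (hν : IsNormalWeight ν) {j : ℕ} (hj : 1 ≤ j)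
    {ρ : ℝ} (hρ0 : 0 ≤ ρ) (hρ1 : ρ < 1) :
    ∃ K > (0:ℝ), ∀ lam : ℂ, ‖lam‖ ≤ ρ → ∀ f : EN N → ℂ, MemHw ν j f →
      growthNorm ν j f ≤ 1 → ‖f (lam • EuclideanSpace.single p (1:ℂ))‖ ≤ K := by
  set r₂ : ℝ := (ρ + 1)/2 with hr₂
  have hr₂0 : 0 < r₂ := by rw [hr₂]; linarith
  have hr₂1 : r₂ < 1 := by rw [hr₂]; linarith
  have hρr₂ : ρ ≤ r₂ := by rw [hr₂]; linarith
  obtain ⟨m, hm0, hm⟩ := nu_min hν hr₂0.le hr₂1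
  refine ⟨1 + 1/m, by positivity, ?_⟩
  intro lam hlam f hf hn
  obtain ⟨hf0, hfg⟩ := growth_bounds hν hf hn
  set g : ℂ → ℂ := fun μ : ℂ => f (μ • EuclideanSpace.single p (1:ℂ)) with hg
  have hganal : AnalyticOnNhd ℂ g (Metric.ball 0 1) :=
    (slice_diff hsub hf.1).analyticOnNhd Metric.isOpen_ball
  -- bound on the top iterate
  have hb : ∀ μ ∈ Metric.closedBall (0:ℂ) r₂, ‖dd^[j] g μ‖ ≤ 1/m := by
    intro μ hμ
    have hμn : ‖μ‖ ≤ r₂ := by rwa [Metric.mem_closedBall, dist_zero_right] at hμ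
    set z : EN N := μ • EuclideanSpace.single p (1:ℂ) with hz
    have hzn : ‖z‖ = ‖μ‖ := norm_smul_single μ
    have hzb : z ∈ unitBall N := by rw [mem_unitBall_iff, hzn]; linarith
    have hrep : radDn j f z = dd^[j] g (z p) := slice_radDn hsub hf.1 j z hzb
    have hzp : z p = μ := coord_smul_single μ
    have hbound := hfg z hzb
    rw [hrep, hzp] at hbound
    have hνz : m ≤ ν ‖z‖ := hm ‖z‖ ⟨norm_nonneg _, by rw [hzn]; exact hμn⟩
    have hmm : m * ‖dd^[j] g μ‖ ≤ 1 :=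
      le_trans (mul_le_mul_of_nonneg_right hνz (norm_nonneg _)) hbound
    rw [le_div_iff₀ hm0]
    linarith [mul_comm m ‖dd^[j] g μ‖]
  -- descent chain
  have hchain : ∀ i k, k + i = j → 1 ≤ k →
      ∀ μ ∈ Metric.closedBall (0:ℂ) r₂, ‖dd^[k] g μ‖ ≤ 1/m := by
    intro i
    induction i with
    | zero =>
      intro k hk _
      rw [Nat.add_zero] at hk
      subst hk
      exact hb
    | succ i ih =>
      intro k hk hk1 μ hμ
      have hd : ∀ μ' ∈ Metric.closedBall (0:ℂ) r₂, ‖dd (dd^[k] g) μ'‖ ≤ 1/m := by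
        intro μ' hμ'
        have hnext := ih (k+1) (by omega) (by omega) μ' hμ'
        rwa [Function.iterate_succ_apply'] at hnext
      have hdesc := dd_descent (ddIter_analyticOnNhd hganal k) hr₂0 hr₂1 hd μ hμ
      rwa [ddIter_zero hk1, sub_zero] at hdesc
  have h1 : ∀ μ ∈ Metric.closedBall (0:ℂ) r₂, ‖dd g μ‖ ≤ 1/m := by
    intro μ hμ
    have h := hchain (j-1) 1 (by omega) le_rfl μ hμ
    rwa [Function.iterate_one] at h
  have hlam2 : lam ∈ Metric.closedBall (0:ℂ) r₂ := by
    rw [Metric.mem_closedBall, dist_zero_right]; linarith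
  have hfin := dd_descent hganal hr₂0 hr₂1 h1 lam hlam2
  have hg0 : g 0 = f 0 := by rw [hg]; simp
  have htri : ‖g lam‖ ≤ ‖g lam - g 0‖ + ‖g 0‖ := by
    have h := norm_add_le (g lam - g 0) (g 0)
    rwa [sub_add_cancel] at h
  have : ‖g lam‖ ≤ 1/m + 1 := by
    have hf0' : ‖g 0‖ ≤ 1 := by rw [hg0]; exact hf0
    linarith
  calc ‖f (lam • EuclideanSpace.single p (1:ℂ))‖ = ‖g lam‖ := rfl
    _ ≤ 1/m + 1 := this
    _ = 1 + 1/m := by ring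
end Slice

/-! ### the constant function 1 -/

lemma radD_zero_fun {N : ℕ} : radD (fun _ : EN N => (0:ℂ)) = fun _ => (0:ℂ) := by
  funext z; simp [radD]

lemma radDn_zero_fun {N : ℕ} (k : ℕ) : radDn k (fun _ : EN N => (0:ℂ)) = fun _ => (0:ℂ) := by
  induction k with
  | zero => rfl
  | succ k ih =>
    rw [radDn, Function.iterate_succ_apply, radD_zero_fun]
    exact ih

lemma radDn_one_fun {N : ℕ} {j : ℕ} (hj : 1 ≤ j) :
    radDn j (fun _ : EN N => (1:ℂ)) = fun _ => (0:ℂ) := by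
  obtain ⟨i, rfl⟩ : ∃ i, j = i + 1 := ⟨j-1, by omega⟩
  rw [radDn, Function.iterate_succ_apply]
  rw [show radD (fun _ : EN N => (1:ℂ)) = (fun _ : EN N => (0:ℂ)) by funext z; simp [radD]]
  exact radDn_zero_fun i

lemma const_one_facts {N : ℕ} {ν : ℝ → ℝ} {j : ℕ} (hj : 1 ≤ j) :
    MemHw (N := N) ν j (fun _ => 1) ∧ growthNorm (N := N) ν j (fun _ => (1:ℂ)) ≤ 1 := by
  have hset : growthSet (N := N) ν j (fun _ => 1) = {0} := by
    rw [growthSet, radDn_one_fun hj]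
    have h1 : (fun z : EN N => ν ‖z‖ * ‖(fun _ : EN N => (0:ℂ)) z‖) = fun _ => (0:ℝ) := by
      funext z; simp
    rw [h1]
    exact Set.Nonempty.image_const ⟨0, zero_mem_unitBall N⟩ 0
  refine ⟨⟨fun z hz => (differentiableWithinAt_const 1), by rw [hset]; exact bddAbove_singleton⟩, ?_⟩
  rw [growthNorm, hset, csSup_singleton]
  simp

lemma evalNorm_le_of {N : ℕ} {ν : ℝ → ℝ} {j : ℕ} {ξ : EN N} {K : ℝ} (hK : 0 ≤ K)
    (hb : ∀ f : EN N → ℂ, MemHw ν j f → growthNorm ν j f ≤ 1 → ‖f ξ‖ ≤ K) :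
    evalNorm ν j ξ ≤ K := by
  rw [evalNorm]
  apply Real.sSup_le _ hK
  rintro x ⟨f, h1, h2, rfl⟩
  exact hb f h1 h2

lemma one_le_evalNorm {N : ℕ} {ν : ℝ → ℝ} {j : ℕ} {ξ : EN N} (hj : 1 ≤ j) {K : ℝ}
    (hb : ∀ f : EN N → ℂ, MemHw ν j f → growthNorm ν j f ≤ 1 → ‖f ξ‖ ≤ K) :
    1 ≤ evalNorm ν j ξ := by
  rw [evalNorm]
  have hone := const_one_facts (N := N) (ν := ν) hj
  have hmem : (1:ℝ) ∈ {r : ℝ | ∃ f : EN N → ℂ, MemHw ν j f ∧ growthNorm ν j f ≤ 1 ∧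
      r = ‖f ξ‖} := ⟨fun _ => 1, hone.1, hone.2, by simp⟩
  refine le_csSup ⟨K, ?_⟩ hmem
  rintro x ⟨f, h1, h2, rfl⟩
  exact hb f h1 h2

lemma coord_le_norm {N : ℕ} (p : Fin N) (z : EN N) : ‖z p‖ ≤ ‖z‖ := by
  have h := norm_inner_le_norm (𝕜 := ℂ) (EuclideanSpace.single p (1:ℂ)) z
  rw [EuclideanSpace.inner_single_left] at h
  simpa [EuclideanSpace.norm_single] using h

/-! ### the Mobius map sends the ball into itself -/

lemma mobius_mem {N : ℕ} {α z : EN N} (hα : α ∈ unitBall N) (hα0 : α ≠ 0)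
    (hz : z ∈ unitBall N) : mobius α z ∈ unitBall N := by
  have hαn : ‖α‖ < 1 := by simpa [unitBall] using hα
  have hzn : ‖z‖ < 1 := by simpa [unitBall] using hz
  have hα0' : (0:ℝ) < ‖α‖ := norm_pos_iff.mpr hα0
  set A : ℂ := ipd z α with hAdef
  have hAi : A = ⟪α, z⟫_ℂ := by
    simp [hAdef, ipd, PiLp.inner_apply, RCLike.inner_apply, mul_comm]
  have hAn : ‖A‖ < 1 := by
    rw [hAi]
    calc ‖⟪α, z⟫_ℂ‖ ≤ ‖α‖ * ‖z‖ := norm_inner_le_norm α z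
    _ < 1 := by nlinarith [norm_nonneg (α : EN N), norm_nonneg (z : EN N)]
  have h1A : (1 : ℂ) - A ≠ 0 := by
    intro h
    have : (1:ℂ) = A := by linear_combination h
    rw [← this] at hAn; simp at hAn
  have h1An : (0:ℝ) < ‖(1:ℂ) - A‖ := norm_pos_iff.mpr h1A
  set s : ℝ := Real.sqrt (1 - ‖α‖^2) with hsdef
  have hs0 : 0 ≤ s := Real.sqrt_nonneg _
  have hs2 : s^2 = 1 - ‖α‖^2 := Real.sq_sqrt (by nlinarith)
  set k : ℝ := (1 - s)/‖α‖^2 with hkdef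
  set t : ℂ := 1 - (k:ℂ) * A with htdef
  have hka : (k:ℝ) * ‖α‖^2 = 1 - s := by
    rw [hkdef, div_mul_cancel₀ _ (pow_ne_zero 2 hα0'.ne')]
  have hαne : ((‖α‖:ℝ) : ℂ) ≠ 0 := by exact_mod_cast hα0'.ne'
  -- rewrite mobius as a linear combination
  have hmob : mobius α z = (1 - A)⁻¹ • (t • α - (s:ℂ) • z) := by
    have htc : t = 1 - (1 - (s:ℂ)) * (A / (‖α‖:ℂ)^2) := by
      rw [htdef, hkdef]; push_cast; ring
    rw [mobius]
    congr 1
    rw [htc, ← hAdef, ← hsdef]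
    match_scalars <;> field_simp <;> ring
  -- key norm identity
  have hkey : ‖t • α - (s:ℂ) • z‖^2 = ‖(1:ℂ) - A‖^2 - (1 - ‖α‖^2)*(1 - ‖z‖^2) := by
    have h1 : ‖t • α - (s:ℂ) • z‖^2
        = ‖t • α‖^2 - 2 * RCLike.re ⟪t • α, (s:ℂ) • z⟫_ℂ + ‖(s:ℂ) • z‖^2 :=
      norm_sub_sq _ _
    rw [h1, inner_smul_left, inner_smul_right, ← hAi]
    have e1 : ‖t • α‖^2 = Complex.normSq t * ‖α‖^2 := by
      rw [norm_smul, mul_pow, ← Complex.sq_norm]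
    have e2 : ‖(s:ℂ) • z‖^2 = s^2 * ‖z‖^2 := by
      rw [norm_smul, mul_pow, Complex.norm_real, Real.norm_of_nonneg hs0]
    have e3 : ‖(1:ℂ) - A‖^2 = Complex.normSq (1 - A) := Complex.sq_norm _
    rw [e1, e2, e3]
    have hre : RCLike.re ((starRingEnd ℂ) t * ((s:ℂ) * A)) = s * (A.re - k * Complex.normSq A) := by
      simp [htdef, Complex.normSq_apply, Complex.mul_re, Complex.mul_im, Complex.sub_re,
        Complex.sub_im, Complex.conj_re, Complex.conj_im, Complex.ofReal_re, Complex.ofReal_im]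
      ring
    rw [hre]
    have hnt : Complex.normSq t = 1 - 2*k*A.re + k^2 * Complex.normSq A := by
      simp [htdef, Complex.normSq_apply, Complex.mul_re, Complex.mul_im, Complex.sub_re,
        Complex.sub_im, Complex.ofReal_re, Complex.ofReal_im]
      ring
    have hn1A : Complex.normSq (1 - A) = 1 - 2*A.re + Complex.normSq A := by
      simp [Complex.normSq_apply, Complex.sub_re, Complex.sub_im]
      ring
    rw [hnt, hn1A]
    have ha2 : ‖α‖^2 = 1 - s^2 := by linarith
    rw [ha2] at hka ⊢
    have hs1 : (1:ℝ) + s ≠ 0 := by positivity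
    have hslt : s < 1 := by nlinarith
    have h1s : (1:ℝ) - s ≠ 0 := by linarith
    have h2 : k*(1+s)*(1-s) = 1*(1-s) := by linear_combination hka
    have h3 : k*(1+s) = 1 := mul_right_cancel₀ h1s h2
    have hk' : k = 1/(1+s) := by rw [eq_div_iff hs1]; exact h3
    rw [hk']
    field_simp
    ring
  -- conclude
  have hprod : 0 < (1 - ‖α‖^2)*(1 - ‖z‖^2) := by
    have h1 : (0:ℝ) < 1 - ‖α‖^2 := by nlinarith [norm_nonneg (α : EN N)]
    have h2 : (0:ℝ) < 1 - ‖z‖^2 := by nlinarith [norm_nonneg (z : EN N)]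
    exact mul_pos h1 h2
  have hlt : ‖t • α - (s:ℂ) • z‖ < ‖(1:ℂ) - A‖ := by
    nlinarith [norm_nonneg (t • α - (s:ℂ) • z : EN N), hkey, hprod, norm_nonneg ((1:ℂ) - A)]
  rw [unitBall, Metric.mem_ball, dist_zero_right, hmob, norm_smul, norm_inv]
  rw [inv_mul_lt_iff₀ h1An, mul_one]
  exact hlt

end Stmt5Aux

end Aux

/-- Lemma for the Möbius automorphism: if
`M_p^{j*} = sup_w h(w)‖δ_{w_p}^{H_ν^{(j)}}‖ < ∞`, then
`sup_z h(z)‖δ_{γ_p(z)}^{H_ν^{(j)}}‖ ≤ C_{p,j} M_p^{j*}`. -/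
theorem stmt_5 {N : ℕ} (p : Fin N) (ν : ℝ → ℝ) (hν : IsNormalWeight ν)
    (h : EN N → ℝ)
    (hpos : ∀ z ∈ unitBall N, 0 < h z)
    (hbdd : ∃ M : ℝ, ∀ z ∈ unitBall N, h z ≤ M)
    (hliminf : ∃ c > (0:ℝ), ∃ r < (1:ℝ), ∀ z ∈ unitBall N, r < ‖z‖ → c ≤ h z)
    (α : EN N) (hα : α ∈ unitBall N) (hα0 : α ≠ 0)
    (j : ℕ) (hj : 1 ≤ j)
    (hM : BddAbove
      ((fun w => h w * evalNorm ν j ((w p) • EuclideanSpace.single p (1:ℂ))) ''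
        unitBall N)) :
    ∃ C > (0:ℝ), ∀ z ∈ unitBall N,
      h z * evalNorm ν j ((mobius α z p) • EuclideanSpace.single p (1:ℂ)) ≤
        C * sSup ((fun w => h w * evalNorm ν j ((w p) • EuclideanSpace.single p (1:ℂ))) ''
          unitBall N) := by
  classical
  obtain ⟨M, hMb⟩ := hbdd
  obtain ⟨c, hc0, r, hr1, hlim⟩ := hliminf
  have h0b : (0:EN N) ∈ unitBall N := Stmt5Aux.zero_mem_unitBall N
  have hM0 : 0 < M := lt_of_lt_of_le (hpos 0 h0b) (hMb 0 h0b)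
  set S := (fun w => h w * evalNorm ν j ((w p) • EuclideanSpace.single p (1:ℂ))) '' unitBall N
    with hS
  set MS := sSup S with hMS
  have hMS0 : 0 ≤ MS := by
    have hel : (0:ℝ) ≤ h 0 * evalNorm ν j (((0:EN N) p) • EuclideanSpace.single p (1:ℂ)) :=
      mul_nonneg (hpos 0 h0b).le (Stmt5Aux.evalNorm_nonneg ν j _)
    exact le_trans hel (le_csSup hM (Set.mem_image_of_mem _ h0b))
  set r₀ : ℝ := max r 0 with hr₀
  have hr₀0 : 0 ≤ r₀ := le_max_right r 0
  have hr₀1 : r₀ < 1 := max_lt hr1 one_pos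
  have hrr₀ : r ≤ r₀ := le_max_left r 0
  set r₁ : ℝ := (r₀ + 1)/2 with hr₁
  have hr₀r₁ : r₀ < r₁ := by rw [hr₁]; linarith
  have hr₁1 : r₁ < 1 := by rw [hr₁]; linarith
  have hr₁0 : 0 < r₁ := by rw [hr₁]; linarith
  -- Step 1 : points with norm > r
  have hstep1 : ∀ w ∈ unitBall N, r < ‖w‖ →
      evalNorm ν j ((w p) • EuclideanSpace.single p (1:ℂ)) ≤ MS / c := by
    intro w hw hrw
    have hc' := hlim w hw hrw
    have hEn := Stmt5Aux.evalNorm_nonneg ν j ((w p) • EuclideanSpace.single p (1:ℂ))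
    have hmem : h w * evalNorm ν j ((w p) • EuclideanSpace.single p (1:ℂ)) ≤ MS :=
      le_csSup hM (Set.mem_image_of_mem _ hw)
    rw [le_div_iff₀ hc0]
    calc evalNorm ν j ((w p) • EuclideanSpace.single p (1:ℂ)) * c
        = c * evalNorm ν j ((w p) • EuclideanSpace.single p (1:ℂ)) := mul_comm _ _
      _ ≤ h w * evalNorm ν j ((w p) • EuclideanSpace.single p (1:ℂ)) :=
          mul_le_mul_of_nonneg_right hc' hEn
      _ ≤ MS := hmem
  -- Step 2 : points with small coordinate
  have hstep2 : ∃ K > (0:ℝ), ∀ lam : ℂ, ‖lam‖ ≤ r₀ →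
      evalNorm ν j (lam • EuclideanSpace.single p (1:ℂ)) ≤ K * MS := by
    by_cases hex : ∃ q : Fin N, q ≠ p
    · obtain ⟨q, hq⟩ := hex
      refine ⟨1/c + 1, by positivity, ?_⟩
      intro lam hlam
      have hlt : ‖lam‖ < r₁ := lt_of_le_of_lt hlam hr₀r₁
      set t : ℝ := Real.sqrt (r₁^2 - ‖lam‖^2) with ht
      have ht0 : 0 ≤ t := Real.sqrt_nonneg _
      have ht2 : t^2 = r₁^2 - ‖lam‖^2 := Real.sq_sqrt (by nlinarith [norm_nonneg lam])
      set w : EN N := lam • EuclideanSpace.single p 1 + (t:ℂ) • EuclideanSpace.single q 1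
        with hw
      have hwp : w p = lam := by
        rw [hw]
        simp [EuclideanSpace.single_apply, hq, Ne.symm hq, PiLp.add_apply, PiLp.smul_apply]
      have hwn : ‖w‖ = r₁ := by
        have hinner : ⟪(lam • EuclideanSpace.single p 1 : EN N),
            (t:ℂ) • EuclideanSpace.single q 1⟫_ℂ = 0 := by
          rw [inner_smul_left, inner_smul_right, EuclideanSpace.inner_single_left]
          simp [EuclideanSpace.single_apply, hq.symm]
        have hsq : ‖w‖^2 = r₁^2 := by
          rw [hw, norm_add_sq (𝕜 := ℂ), hinner]
          rw [Stmt5Aux.norm_smul_single lam]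
          rw [norm_smul, EuclideanSpace.norm_single]
          simp only [map_zero, mul_zero, add_zero, norm_one, mul_one, Complex.norm_real,
            Real.norm_eq_abs, abs_of_nonneg ht0]
          nlinarith [ht2]
        calc ‖w‖ = Real.sqrt (‖w‖^2) := (Real.sqrt_sq (norm_nonneg w)).symm
          _ = Real.sqrt (r₁^2) := by rw [hsq]
          _ = r₁ := Real.sqrt_sq hr₁0.le
      have hwb : w ∈ unitBall N := Stmt5Aux.mem_unitBall_iff.mpr (by rw [hwn]; exact hr₁1)
      have hrw : r < ‖w‖ := by rw [hwn]; linarith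
      have hE := hstep1 w hwb hrw
      rw [hwp] at hE
      have hdiv : MS / c = (1/c) * MS := by ring
      calc evalNorm ν j (lam • EuclideanSpace.single p (1:ℂ)) ≤ MS / c := hE
        _ = (1/c) * MS := hdiv
        _ ≤ (1/c + 1) * MS := mul_le_mul_of_nonneg_right (by linarith) hMS0
    · have hsub : ∀ i : Fin N, i = p := by
        intro i
        by_contra hi
        exact hex ⟨i, hi⟩
      obtain ⟨K, hK0, hKb⟩ := Stmt5Aux.locBound hsub hν hj hr₀0 hr₀1
      obtain ⟨K₁, hK₁0, hK₁b⟩ := Stmt5Aux.locBound hsub hν hj (ρ := r₁) hr₁0.le hr₁1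
      have hr₁n : ‖((r₁:ℝ) : ℂ)‖ = r₁ := by
        rw [Complex.norm_real, Real.norm_eq_abs, abs_of_nonneg hr₁0.le]
      -- the evaluation functional at r₁ • e_p is at least 1
      have hE1 : 1 ≤ evalNorm ν j (((r₁:ℝ):ℂ) • EuclideanSpace.single p (1:ℂ)) :=
        Stmt5Aux.one_le_evalNorm hj (fun f hf1 hf2 => hK₁b _ (le_of_eq hr₁n) f hf1 hf2)
      set w₀ : EN N := ((r₁:ℝ):ℂ) • EuclideanSpace.single p (1:ℂ) with hw₀
      have hw₀n : ‖w₀‖ = r₁ := by rw [hw₀, Stmt5Aux.norm_smul_single, hr₁n]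
      have hw₀b : w₀ ∈ unitBall N := Stmt5Aux.mem_unitBall_iff.mpr (by rw [hw₀n]; exact hr₁1)
      have hw₀p : w₀ p = ((r₁:ℝ):ℂ) := Stmt5Aux.coord_smul_single _
      have hMSc : c ≤ MS := by
        have hrw₀ : r < ‖w₀‖ := by rw [hw₀n]; linarith
        have hc' := hlim w₀ hw₀b hrw₀
        have hmemS : h w₀ * evalNorm ν j ((w₀ p) • EuclideanSpace.single p (1:ℂ)) ≤ MS :=
          le_csSup hM (Set.mem_image_of_mem _ hw₀b)
        have hE1' : 1 ≤ evalNorm ν j ((w₀ p) • EuclideanSpace.single p (1:ℂ)) := by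
          rw [hw₀p]; exact hE1
        nlinarith [hpos w₀ hw₀b]
      refine ⟨K/c, by positivity, ?_⟩
      intro lam hlam
      have hEb : evalNorm ν j (lam • EuclideanSpace.single p (1:ℂ)) ≤ K :=
        Stmt5Aux.evalNorm_le_of hK0.le (fun f hf1 hf2 => hKb lam hlam f hf1 hf2)
      calc evalNorm ν j (lam • EuclideanSpace.single p (1:ℂ)) ≤ K := hEb
        _ = (K/c) * c := (div_mul_cancel₀ K hc0.ne').symm
        _ ≤ (K/c) * MS := mul_le_mul_of_nonneg_left hMSc (by positivity)
  obtain ⟨K, hK0, hKs⟩ := hstep2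
  refine ⟨M/c + M*K, by positivity, ?_⟩
  intro z hz
  have hwball : mobius α z ∈ unitBall N := Stmt5Aux.mobius_mem hα hα0 hz
  have hhz : h z ≤ M := hMb z hz
  have hhz0 : 0 < h z := hpos z hz
  have hE0 : 0 ≤ evalNorm ν j ((mobius α z p) • EuclideanSpace.single p (1:ℂ)) :=
    Stmt5Aux.evalNorm_nonneg ν j _
  by_cases hcase : r < ‖mobius α z‖
  · have hE := hstep1 (mobius α z) hwball hcase
    calc h z * evalNorm ν j ((mobius α z p) • EuclideanSpace.single p (1:ℂ))
        ≤ M * (MS/c) := mul_le_mul hhz hE hE0 hM0.le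
      _ = (M/c)*MS := by ring
      _ ≤ (M/c + M*K)*MS := mul_le_mul_of_nonneg_right (le_add_of_nonneg_right (mul_nonneg hM0.le hK0.le)) hMS0
  · have hlam : ‖mobius α z p‖ ≤ r₀ := by
      calc ‖mobius α z p‖ ≤ ‖mobius α z‖ := Stmt5Aux.coord_le_norm p (mobius α z)
        _ ≤ r := not_lt.mp hcase
        _ ≤ r₀ := hrr₀
    have hE := hKs (mobius α z p) hlam
    calc h z * evalNorm ν j ((mobius α z p) • EuclideanSpace.single p (1:ℂ))
        ≤ M * (K * MS) := mul_le_mul hhz hE hE0 hM0.le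
      _ = (M*K)*MS := by ring
      _ ≤ (M/c + M*K)*MS := mul_le_mul_of_nonneg_right (le_add_of_nonneg_left (div_nonneg hM0.le hc0.le)) hMS0
end

section
/- Fix α ∈ (0,1) and p ∈ {1,…,N}. There exists q₀ ∈ ℕ such that for every integer q ≥ q₀ the following holds. Define ψ̃(z) = Σ_{i=0}^∞ q^{i(α−1)+α/2} z_p^{q^i} for z ∈ B (the series converges locally uniformly on B, so ψ̃ ∈ H(B), and Rψ̃(z) = Σ_{i=0}^∞ q^{i(α−1)+α/2+i} z_p^{q^i}). Then for every k ∈ ℕ and every z ∈ B satisfying 1 − 1/q^k ≤ |z_p| ≤ |z| ≤ 1 − 1/q^{k+1/2}, one has |Rψ̃(z)| ≥ (1/4)·(1−|z|)^{−α}. -/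
open scoped BigOperators ComplexConjugate
open MeasureTheory Filter Set

section Stmt19Aux
open Real Filter

lemma summable_key (q : ℕ) (hq : 2 ≤ q) (A : ℝ) (hA : 1 ≤ A) (r : ℝ) (hr0 : 0 ≤ r) (hr1 : r < 1) :
    Summable (fun i : ℕ => A ^ (i+1) * r ^ (q ^ i)) := by
  rcases eq_or_lt_of_le hr0 with h0 | h0
  · have : (fun i : ℕ => A ^ (i+1) * r ^ (q ^ i)) = fun _ => 0 := by
      funext i
      rw [← h0, zero_pow (by positivity), mul_zero]
    rw [this]; exact summable_zero
  · have hA0 : 0 < A := lt_of_lt_of_le one_pos hA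
    obtain ⟨M, hM⟩ : ∃ M : ℕ, A * r ^ M < 1/2 := by
      have := (tendsto_pow_atTop_nhds_zero_of_lt_one hr0 hr1).const_mul A
      rw [mul_zero] at this
      have := this.eventually (gt_mem_nhds (by norm_num : (0:ℝ) < 1/2))
      exact this.exists
    apply summable_of_ratio_norm_eventually_le (r := 1/2) (by norm_num)
    filter_upwards [eventually_ge_atTop M] with i hi
    have hqi : M ≤ q ^ (i+1) - q ^ i := by
      have h1 : q ^ i * 1 ≤ q ^ i * (q - 1) := by
        apply Nat.mul_le_mul_left
        omega
      have h2 : q ^ i * (q - 1) = q ^ (i+1) - q ^ i := by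
        rw [Nat.mul_sub, pow_succ]; ring_nf
      have h3 : i < q ^ i := Nat.lt_pow_self (n := i) (show 1 < q by omega)
      omega
    have hsplit : q ^ (i+1) = q ^ i + (q ^ (i+1) - q ^ i) :=
      (Nat.add_sub_cancel' (Nat.pow_le_pow_right (by omega) (by omega))).symm
    rw [norm_mul, norm_mul, norm_pow, norm_pow, norm_pow, norm_pow]
    rw [Real.norm_of_nonneg hA0.le, Real.norm_of_nonneg hr0]
    have hb : r ^ (q ^ (i+1) - q ^ i) ≤ r ^ M := pow_le_pow_of_le_one hr0 hr1.le hqi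
    calc A ^ (i+1+1) * r ^ (q ^ (i+1))
        = (A * r ^ (q ^ (i+1) - q ^ i)) * (A ^ (i+1) * r ^ (q ^ i)) := by
          rw [hsplit]; rw [pow_add r]; ring_nf; congr 2; omega
      _ ≤ (1/2) * (A ^ (i+1) * r ^ (q ^ i)) := by
          apply mul_le_mul_of_nonneg_right _ (by positivity)
          calc A * r ^ (q ^ (i+1) - q ^ i) ≤ A * r ^ M := by
                exact mul_le_mul_of_nonneg_left hb hA0.le
            _ ≤ 1/2 := hM.le

lemma hasDerivAt_lacunary (q : ℕ) (hq : 2 ≤ q) (c : ℕ → ℝ)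
    (hc : ∀ i, |c i| * ((q ^ i : ℕ) : ℝ) ≤ (q:ℝ) ^ (i+1)) (w : ℂ) (hw : ‖w‖ < 1) :
    HasDerivAt (fun y : ℂ => ∑' i : ℕ, (c i : ℂ) * y ^ (q ^ i))
      (∑' i : ℕ, (c i : ℂ) * ((q ^ i : ℕ) : ℂ) * w ^ (q ^ i - 1)) w := by
  set r : ℝ := (1 + ‖w‖)/2 with hr
  have hr0 : 0 < r := by positivity
  have hwr : ‖w‖ < r := by rw [hr]; linarith
  have hr1 : r < 1 := by rw [hr]; linarith
  have hu : Summable (fun i : ℕ => (1/r) * ((q:ℝ) ^ (i+1) * r ^ (q ^ i))) :=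
    (summable_key q hq (q:ℝ) (by exact_mod_cast hq.trans' one_le_two) r hr0.le hr1).mul_left _
  have hueq : ∀ i : ℕ, (1/r) * ((q:ℝ) ^ (i+1) * r ^ (q ^ i)) = (q:ℝ) ^ (i+1) * r ^ (q ^ i - 1) := by
    intro i
    have h1 : q ^ i = (q ^ i - 1) + 1 := by
      have := Nat.one_le_two_pow (n := i)
      have h2 : 1 ≤ q ^ i := Nat.one_le_pow _ _ (by omega)
      omega
    rw [h1, pow_succ]
    field_simp
    ring_nf
    rw [Nat.add_sub_cancel_left]
  rw [funext hueq] at hu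
  apply hasDerivAt_tsum_of_isPreconnected hu (Metric.isOpen_ball (x := (0:ℂ)) (ε := r))
    ((convex_ball (0:ℂ) r).isPreconnected)
    (g' := fun i y => (c i : ℂ) * ((q ^ i : ℕ) : ℂ) * y ^ (q ^ i - 1))
    (y₀ := (0:ℂ))
  · intro i y _
    have := (hasDerivAt_pow (q ^ i) y).const_mul (c i : ℂ)
    refine this.congr_deriv ?_
    push_cast
    ring
  · intro i y hy
    rw [Metric.mem_ball, dist_zero_right] at hy
    rw [norm_mul, norm_mul, Complex.norm_real, Complex.norm_natCast, norm_pow]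
    calc ‖c i‖ * ((q ^ i : ℕ) : ℝ) * ‖y‖ ^ (q ^ i - 1)
        ≤ (q:ℝ) ^ (i+1) * r ^ (q ^ i - 1) := by
          apply mul_le_mul (by rw [Real.norm_eq_abs]; exact hc i)
            (pow_le_pow_left₀ (norm_nonneg y) hy.le _) (by positivity) (by positivity)
      _ = (q:ℝ) ^ (i+1) * r ^ (q ^ i - 1) := rfl
  · exact Metric.mem_ball_self hr0
  · have : (fun i : ℕ => (c i : ℂ) * (0:ℂ) ^ (q ^ i)) = fun _ => 0 := by
      funext i
      rw [zero_pow (by positivity), mul_zero]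
    rw [this]; exact summable_zero
  · rw [Metric.mem_ball, dist_zero_right]; exact hwr

lemma main_lb (n : ℕ) (hn : 1000000 ≤ n) : (0.36:ℝ) ≤ (1 - 1/(n:ℝ))^n := by
  have hn1 : (1000000:ℝ) ≤ (n:ℝ) := by exact_mod_cast hn
  set t : ℝ := 1/((n:ℝ) - 1) with ht
  have ht0 : 0 < t := by rw [ht]; exact div_pos one_pos (by linarith)
  have h1 : Real.exp (-t) ≤ 1 - 1/(n:ℝ) := by
    have h2 : t + 1 ≤ Real.exp t := Real.add_one_le_exp t
    have h3 : Real.exp (-t) = 1 / Real.exp t := by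
      rw [Real.exp_neg]; ring
    rw [h3]
    rw [div_le_iff₀ (Real.exp_pos t)]
    have : (1 - 1/(n:ℝ)) * (t + 1) ≤ (1 - 1/(n:ℝ)) * Real.exp t := by
      apply mul_le_mul_of_nonneg_left h2
      have : 1/(n:ℝ) ≤ 1 := by rw [div_le_one (by linarith)]; linarith
      linarith
    refine le_trans ?_ this
    have heq : (1 - 1/(n:ℝ)) * (t + 1) = 1 := by
      rw [ht]
      have h9 : (n:ℝ) - 1 ≠ 0 := by linarith
      have h10 : (n:ℝ) ≠ 0 := by linarith
      field_simp
      ring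
    rw [heq]
  have h4 : Real.exp (-t) ^ n ≤ (1 - 1/(n:ℝ))^n :=
    pow_le_pow_left₀ (Real.exp_pos _).le h1 n
  refine le_trans ?_ h4
  rw [← Real.exp_nat_mul]
  have h5 : (n:ℝ) * (-t) = -((n:ℝ) * t) := by ring
  rw [h5]
  have h6 : (n:ℝ) * t ≤ 1.000002 := by
    rw [ht, mul_one_div, div_le_iff₀ (by linarith)]
    nlinarith
  have h7 : Real.exp (-((n:ℝ)*t)) ≥ Real.exp (-(1.000002:ℝ)) := Real.exp_le_exp.2 (by linarith)
  refine le_trans ?_ h7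
  rw [Real.exp_neg, le_inv_comm₀ (by norm_num) (Real.exp_pos _)]
  have : Real.exp (1.000002:ℝ) = Real.exp 1 * Real.exp 0.000002 := by
    rw [← Real.exp_add]; norm_num
  rw [this]
  have he1 : Real.exp 1 < 2.7182818286 := Real.exp_one_lt_d9
  have he2 : Real.exp (0.000002:ℝ) ≤ 1/(1 - 0.000002) := by
    have h8 : (1:ℝ) - 0.000002 ≤ Real.exp (-0.000002) := by
      have := Real.add_one_le_exp (-0.000002:ℝ)
      linarith
    rw [le_div_iff₀ (by norm_num)]
    calc Real.exp 0.000002 * (1 - 0.000002)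
        ≤ Real.exp 0.000002 * Real.exp (-0.000002) := by
          apply mul_le_mul_of_nonneg_left h8 (Real.exp_pos _).le
      _ = 1 := by rw [← Real.exp_add]; norm_num
  calc Real.exp 1 * Real.exp 0.000002 ≤ 2.7182818286 * (1/(1-0.000002)) := by
        apply mul_le_mul he1.le he2 (Real.exp_pos _).le (by norm_num)
    _ ≤ (0.36:ℝ)⁻¹ := by norm_num

lemma rr_bound (A : ℝ) (hA : 1000000 ≤ A) : A * Real.exp (-Real.sqrt A) ≤ 0.027 := by
  set s : ℝ := Real.sqrt A with hs
  have hs1000 : 1000 ≤ s := by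
    rw [hs]
    have : (1000:ℝ) = Real.sqrt (1000^2) := by
      rw [Real.sqrt_sq (by norm_num)]
    rw [this]
    apply Real.sqrt_le_sqrt
    norm_num
    linarith
  have hs0 : 0 < s := by linarith
  have hsq : s * s = A := Real.mul_self_sqrt (by linarith)
  have hexp : s^3/27 ≤ Real.exp s := by
    have h1 : Real.exp s = (Real.exp (s/3))^3 := by
      rw [← Real.exp_nat_mul]
      congr 1
      push_cast
      ring
    have h2 : s/3 ≤ Real.exp (s/3) := by
      have := Real.add_one_le_exp (s/3)
      linarith
    rw [h1]
    calc s^3/27 = (s/3)^3 := by ring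
      _ ≤ (Real.exp (s/3))^3 := pow_le_pow_left₀ (by linarith) h2 3
  have hepos := Real.exp_pos s
  rw [Real.exp_neg]
  rw [mul_inv_le_iff₀ hepos]
  nlinarith [hexp, hsq, hs1000, hs0, mul_le_mul_of_nonneg_left hexp (by norm_num : (0:ℝ) ≤ 0.027), sq_nonneg (s - 1000)]

set_option maxHeartbeats 2000000 in
lemma estimate (q : ℕ) (α : ℝ) (hα0 : 0 < α) (hα1 : α < 1)
    (hq6 : 1000000 ≤ q) (hq21 : (21:ℝ) ≤ (q:ℝ) ^ α)
    (k : ℕ) (hk : 1 ≤ k) (w : ℂ) (R : ℝ)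
    (h1 : 1 - 1/(q:ℝ)^k ≤ ‖w‖) (h2 : ‖w‖ ≤ R) (h3 : R ≤ 1 - 1/(q:ℝ)^((k:ℝ)+1/2)) :
    (1/4) * (1-R)^(-α) ≤ ‖∑' i : ℕ, (((q:ℝ) ^ ((i:ℝ)*α + α/2) : ℝ) : ℂ) * w ^ (q^i)‖ := by
  have hq2 : 2 ≤ q := by omega
  set A : ℝ := (q:ℝ) with hA
  have hA6 : (1000000:ℝ) ≤ A := by rw [hA]; exact_mod_cast hq6
  have hA1 : (1:ℝ) ≤ A := by linarith
  have hA0 : (0:ℝ) < A := by linarith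
  set b : ℕ → ℝ := fun i => A ^ ((i:ℝ)*α + α/2) with hb
  set f : ℕ → ℂ := fun i => ((b i : ℝ) : ℂ) * w ^ (q^i) with hf
  have hbpos : ∀ i, 0 < b i := fun i => Real.rpow_pos_of_pos hA0 _
  set ρ : ℝ := ‖w‖ with hρ
  have hρ0 : 0 ≤ ρ := norm_nonneg w
  -- basic bounds on the radii
  have hAk : (0:ℝ) < A ^ ((k:ℝ) + 1/2) := Real.rpow_pos_of_pos hA0 _
  have hAk1 : (1:ℝ) ≤ A ^ ((k:ℝ) + 1/2) := Real.one_le_rpow hA1 (by positivity)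
  set Rm : ℝ := 1 - 1/A^((k:ℝ)+1/2) with hRm
  have hRm1 : Rm < 1 := by rw [hRm]; have : 0 < 1/A^((k:ℝ)+1/2) := by positivity
                           linarith
  have hRm0 : 0 ≤ Rm := by
    rw [hRm]
    have : 1/A^((k:ℝ)+1/2) ≤ 1 := by
      rw [div_le_one hAk]; exact hAk1
    linarith
  have hρRm : ρ ≤ Rm := le_trans h2 h3
  have hρ1 : ρ < 1 := lt_of_le_of_lt hρRm hRm1
  -- coefficient bound  b i ≤ A^(i+1)
  have hble : ∀ i : ℕ, b i ≤ A ^ (i+1) := by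
    intro i
    rw [hb]
    have h4 : (i:ℝ)*α + α/2 ≤ ((i:ℕ):ℝ) + 1 := by
      have : (i:ℝ)*α ≤ (i:ℝ) := by
        nlinarith [Nat.cast_nonneg (α := ℝ) i]
      linarith
    calc A ^ ((i:ℝ)*α + α/2) ≤ A ^ (((i+1:ℕ)):ℝ) := by
          apply Real.rpow_le_rpow_of_exponent_le hA1
          push_cast
          push_cast at h4
          linarith
      _ = A ^ (i+1) := Real.rpow_natCast A (i+1)
  -- summability
  have hsum : Summable (fun i : ℕ => b i * ρ ^ (q^i)) := by
    apply Summable.of_nonneg_of_le (fun i => by positivity)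
      (fun i => mul_le_mul_of_nonneg_right (hble i) (by positivity))
      (summable_key q hq2 A hA1 ρ hρ0 hρ1)
  have hnorm_eq : ∀ i : ℕ, ‖f i‖ = b i * ρ ^ (q^i) := by
    intro i
    rw [hf]
    simp only [norm_mul, Complex.norm_real, norm_pow]
    rw [Real.norm_of_nonneg (hbpos i).le, hρ]
  have hsumc : Summable f := by
    apply Summable.of_norm
    rw [funext hnorm_eq]
    exact hsum
  -- split the sum
  have hsplit : ∑ i ∈ Finset.range (k+1), f i + ∑' i, f (i+(k+1)) = ∑' i, f i :=
    Summable.sum_add_tsum_nat_add (k+1) hsumc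
  set T : ℂ := ∑' i, f (i+(k+1)) with hT
  have hdecomp : ∑' i, f i = (∑ i ∈ Finset.range k, f i) + f k + T := by
    rw [← hsplit, Finset.sum_range_succ]
  -- MAIN TERM: 0.36 * b k ≤ ‖f k‖
  have hqk6 : 1000000 ≤ q^k := le_trans hq6 (Nat.le_self_pow (by omega) q)
  have hE1 : 0.36 * b k ≤ ‖f k‖ := by
    rw [hnorm_eq k]
    have c1 : (0.36:ℝ) ≤ (1 - 1/((q^k : ℕ):ℝ))^(q^k) := main_lb (q^k) hqk6
    have c2 : (1 - 1/((q^k : ℕ):ℝ)) = 1 - 1/A^k := by push_cast; rw [hA]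
    rw [c2] at c1
    have c0 : (0:ℝ) ≤ 1 - 1/A^k := by
      have : (1:ℝ) ≤ A^k := one_le_pow₀ hA1
      have : 1/A^k ≤ 1 := by rw [div_le_one (by linarith)]; linarith
      linarith
    have c3 : (1 - 1/A^k)^(q^k) ≤ ρ^(q^k) := pow_le_pow_left₀ c0 h1 _
    calc 0.36 * b k ≤ (1 - 1/A^k)^(q^k) * b k := by nlinarith [hbpos k]
      _ ≤ ρ^(q^k) * b k := by nlinarith [hbpos k]
      _ = b k * ρ^(q^k) := by ring
  -- LOWER-INDEX TERMS
  have hE2 : ‖∑ i ∈ Finset.range k, f i‖ ≤ (1/20) * b k := by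
    set x : ℝ := A ^ α with hx
    have hx21 : (21:ℝ) ≤ x := hq21
    have hx1 : x ≠ 1 := by linarith
    have hbx : ∀ i : ℕ, b i = A^(α/2) * x^i := by
      intro i
      simp only [hb, hx]
      rw [show (i:ℝ)*α + α/2 = α/2 + α*(i:ℝ) by ring]
      rw [Real.rpow_add hA0, Real.rpow_mul hA0.le, Real.rpow_natCast]
    calc ‖∑ i ∈ Finset.range k, f i‖ ≤ ∑ i ∈ Finset.range k, ‖f i‖ := norm_sum_le _ _
      _ ≤ ∑ i ∈ Finset.range k, b i := by
          apply Finset.sum_le_sum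
          intro i _
          rw [hnorm_eq i]
          calc b i * ρ^(q^i) ≤ b i * 1 := by
                apply mul_le_mul_of_nonneg_left _ (hbpos i).le
                exact pow_le_one₀ hρ0 hρ1.le
            _ = b i := mul_one _
      _ = A^(α/2) * ∑ i ∈ Finset.range k, x^i := by
          rw [Finset.mul_sum]
          exact Finset.sum_congr rfl (fun i _ => hbx i)
      _ ≤ A^(α/2) * (x^k / 20) := by
          apply mul_le_mul_of_nonneg_left _ (Real.rpow_pos_of_pos hA0 _).le
          rw [geom_sum_eq hx1]
          rw [div_le_div_iff₀ (by linarith) (by norm_num)]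
          have hxk : (1:ℝ) ≤ x^k := one_le_pow₀ (by linarith)
          nlinarith
      _ = (1/20) * b k := by rw [hbx k]; ring
  -- TAIL
  set s : ℝ := Real.sqrt A with hs
  have hs0 : 0 < s := Real.sqrt_pos.2 hA0
  set rr : ℝ := A * Real.exp (-s) with hrr
  have hrr0 : 0 < rr := by positivity
  have hrr27 : rr ≤ 0.027 := rr_bound A hA6
  have hrr1 : rr < 1 := by linarith
  have hE3 : ‖T‖ ≤ 0.03 * b k := by
    have htail_sum : Summable (fun i : ℕ => b (i+(k+1)) * ρ ^ (q^(i+(k+1)))) :=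
      (summable_nat_add_iff (k+1)).2 hsum
    have hTle : ‖T‖ ≤ ∑' i : ℕ, b (i+(k+1)) * ρ ^ (q^(i+(k+1))) := by
      rw [hT]
      have := norm_tsum_le_tsum_norm (f := fun i => f (i+(k+1))) ?_
      · refine le_trans this (le_of_eq ?_)
        exact tsum_congr (fun i => hnorm_eq (i+(k+1)))
      · have : (fun i : ℕ => ‖f (i+(k+1))‖) = fun i => b (i+(k+1)) * ρ ^ (q^(i+(k+1))) := by
          funext i; exact hnorm_eq _
        rw [this]; exact htail_sum
    -- per-term bound
    have hterm : ∀ i : ℕ, b (i+(k+1)) * ρ ^ (q^(i+(k+1))) ≤ b k * rr^(i+1) := by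
      intro i
      have p1 : b (i+(k+1)) ≤ b k * A^(i+1) := by
        simp only [hb]
        have : ((i+(k+1):ℕ):ℝ)*α + α/2 = ((k:ℝ)*α + α/2) + ((i:ℝ)+1)*α := by push_cast; ring
        rw [this, Real.rpow_add hA0]
        apply mul_le_mul_of_nonneg_left _ (Real.rpow_pos_of_pos hA0 _).le
        calc A ^ (((i:ℝ)+1)*α) ≤ A ^ (((i+1:ℕ)):ℝ) := by
              apply Real.rpow_le_rpow_of_exponent_le hA1
              push_cast
              nlinarith [Nat.cast_nonneg (α := ℝ) i]
          _ = A ^ (i+1) := Real.rpow_natCast A (i+1)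
      have p2 : ρ ^ (q^(i+(k+1))) ≤ Real.exp (-s) ^ (i+1) := by
        have q1 : Rm ≤ Real.exp (-(1/A^((k:ℝ)+1/2))) := by
          rw [hRm]
          have := Real.add_one_le_exp (-(1/A^((k:ℝ)+1/2)))
          linarith
        have q2 : ρ ^ (q^(i+(k+1))) ≤ Real.exp (-(1/A^((k:ℝ)+1/2))) ^ (q^(i+(k+1))) :=
          pow_le_pow_left₀ hρ0 (le_trans hρRm q1) _
        refine le_trans q2 ?_
        rw [← Real.exp_nat_mul, ← Real.exp_nat_mul]
        apply Real.exp_le_exp.2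
        -- need : (q^(i+k+1)) * (-(1/A^(k+1/2))) ≤ (i+1) * (-s)
        rw [mul_neg, mul_neg, neg_le_neg_iff]
        -- (i+1) * s ≤ q^(i+k+1) / A^(k+1/2)
        have r1 : ((q^(i+(k+1)):ℕ):ℝ) * (1/A^((k:ℝ)+1/2)) = A^((i:ℝ)+1/2) := by
          have : ((q^(i+(k+1)):ℕ):ℝ) = A ^ (((i+(k+1):ℕ)):ℝ) := by
            rw [Real.rpow_natCast]; push_cast; rw [hA]
          rw [this, one_div, ← Real.rpow_neg hA0.le, ← Real.rpow_add hA0]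
          congr 1
          push_cast
          ring
        rw [r1]
        have r2 : A^((i:ℝ)+1/2) = ((q^i:ℕ):ℝ) * s := by
          rw [Real.rpow_add hA0, Real.rpow_natCast, hs, ← Real.rpow_natCast A i]
          congr 1
          · rw [Real.rpow_natCast]; push_cast; rw [hA]
          · rw [Real.sqrt_eq_rpow]
        rw [r2]
        apply mul_le_mul_of_nonneg_right _ hs0.le
        have : i + 1 ≤ q^i := by
          have := Nat.lt_pow_self (n := i) (show 1 < q by omega)
          omega
        exact_mod_cast this
      calc b (i+(k+1)) * ρ ^ (q^(i+(k+1)))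
          ≤ (b k * A^(i+1)) * (Real.exp (-s) ^ (i+1)) := by
            apply mul_le_mul p1 p2 (by positivity) (by positivity)
        _ = b k * rr^(i+1) := by rw [hrr, mul_pow]; ring
    have hgeom : Summable (fun i : ℕ => b k * rr^(i+1)) := by
      apply Summable.mul_left
      exact (summable_geometric_of_lt_one hrr0.le hrr1).comp_injective (add_left_injective 1)
    have hT2 : ∑' i : ℕ, b (i+(k+1)) * ρ ^ (q^(i+(k+1))) ≤ ∑' i : ℕ, b k * rr^(i+1) :=
      Summable.tsum_le_tsum hterm htail_sum hgeom
    have hT3 : ∑' i : ℕ, b k * rr^(i+1) = b k * (rr * (1-rr)⁻¹) := by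
      have : (fun i : ℕ => b k * rr^(i+1)) = fun i => (b k * rr) * rr^i := by
        funext i; rw [pow_succ]; ring
      rw [this, tsum_mul_left, tsum_geometric_of_lt_one hrr0.le hrr1]
      ring
    have hT4 : rr * (1-rr)⁻¹ ≤ 0.03 := by
      rw [mul_inv_le_iff₀ (by linarith)]
      linarith
    calc ‖T‖ ≤ ∑' i : ℕ, b (i+(k+1)) * ρ ^ (q^(i+(k+1))) := hTle
      _ ≤ b k * (rr * (1-rr)⁻¹) := by rw [← hT3]; exact hT2
      _ ≤ b k * 0.03 := mul_le_mul_of_nonneg_left hT4 (hbpos k).le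
      _ = 0.03 * b k := by ring
  -- combine
  have hlower : 0.28 * b k ≤ ‖∑' i, f i‖ := by
    have t1 : f k = (∑' i, f i) - (∑ i ∈ Finset.range k, f i) - T := by
      rw [hdecomp]; ring
    have t2 : ‖f k‖ ≤ ‖∑' i, f i‖ + ‖∑ i ∈ Finset.range k, f i‖ + ‖T‖ := by
      rw [t1]
      calc ‖(∑' i, f i) - (∑ i ∈ Finset.range k, f i) - T‖
          ≤ ‖(∑' i, f i) - (∑ i ∈ Finset.range k, f i)‖ + ‖T‖ := norm_sub_le _ _
        _ ≤ ‖∑' i, f i‖ + ‖∑ i ∈ Finset.range k, f i‖ + ‖T‖ := by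
            have := norm_sub_le (∑' i, f i) (∑ i ∈ Finset.range k, f i)
            linarith
    linarith
  -- final comparison
  have hfinal : (1-R)^(-α) ≤ b k := by
    have u0 : (0:ℝ) < 1/A^((k:ℝ)+1/2) := by positivity
    have h3' : R ≤ 1 - 1/A^((k:ℝ)+1/2) := h3
    have u1 : 1/A^((k:ℝ)+1/2) ≤ 1 - R := by linarith
    have u2 : (1-R)^(-α) ≤ (1/A^((k:ℝ)+1/2))^(-α) :=
      Real.rpow_le_rpow_of_nonpos u0 u1 (by linarith)
    refine le_trans u2 (le_of_eq ?_)
    have v1 : (1/A^((k:ℝ)+1/2))^(-α) = A ^ ((-((k:ℝ)+1/2))*(-α)) := by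
      rw [one_div, ← Real.rpow_neg hA0.le, Real.rpow_mul hA0.le]
    rw [v1]
    simp only [hb]
    congr 1
    ring
  have hgoal : ∑' i : ℕ, (((q:ℝ) ^ ((i:ℝ)*α + α/2) : ℝ) : ℂ) * w ^ (q^i) = ∑' i, f i := by
    apply tsum_congr
    intro i
    simp only [hf, hb, hA]
  rw [hgoal]
  calc (1/4) * (1-R)^(-α) ≤ (1/4) * b k := by
        apply mul_le_mul_of_nonneg_left hfinal (by norm_num)
    _ ≤ 0.28 * b k := by nlinarith [hbpos k]
    _ ≤ ‖∑' i, f i‖ := hlower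

lemma norm_coord {N : ℕ} (z : EN N) (p : Fin N) : ‖z p‖ ≤ ‖z‖ := by
  rw [EuclideanSpace.norm_eq]
  have h1 : ‖z p‖^2 ≤ ∑ i, ‖z i‖^2 :=
    Finset.single_le_sum (f := fun i => ‖z i‖^2) (fun i _ => by positivity) (Finset.mem_univ p)
  have := Real.sqrt_le_sqrt h1
  rwa [Real.sqrt_sq (norm_nonneg _)] at this


end Stmt19Aux

/-- the lacunary series `ψ̃(z) = Σ_i q^{i(α−1)+α/2} z_p^{q^i}` is holomorphic
on `B`, its radial derivative is the series `Σ_i q^{i(α−1)+α/2+i} z_p^{q^i}`, and for `q`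
large and `1 − 1/q^k ≤ |z_p| ≤ |z| ≤ 1 − 1/q^{k+1/2}` one has
`|Rψ̃(z)| ≥ (1/4)(1−|z|)^{−α}`. -/
theorem stmt_19 {N : ℕ} (p : Fin N) (α : ℝ) (hα0 : 0 < α) (hα1 : α < 1) :
    ∃ q₀ : ℕ, ∀ q : ℕ, q₀ ≤ q →
      ∀ ψt : EN N → ℂ,
        (∀ z : EN N, ψt z =
          ∑' i : ℕ, (((q : ℝ) ^ ((i : ℝ) * (α - 1) + α / 2) : ℝ) : ℂ) * (z p) ^ (q ^ i)) →
        ψt ∈ HolB N ∧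
        (∀ z ∈ unitBall N, radD ψt z =
          ∑' i : ℕ,
            (((q : ℝ) ^ ((i : ℝ) * (α - 1) + α / 2 + (i : ℝ)) : ℝ) : ℂ) * (z p) ^ (q ^ i)) ∧
        (∀ k : ℕ, 1 ≤ k → ∀ z ∈ unitBall N,
          1 - 1 / (q : ℝ) ^ k ≤ ‖z p‖ → ‖z p‖ ≤ ‖z‖ →
          ‖z‖ ≤ 1 - 1 / ((q : ℝ) ^ ((k : ℝ) + 1 / 2)) →
          (1 / 4) * (1 - ‖z‖) ^ (-α) ≤ ‖radD ψt z‖) := by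
  refine ⟨max 1000000 (⌈(21:ℝ)^(1/α)⌉₊ + 1), fun q hq ψt hψ => ?_⟩
  have hq6 : 1000000 ≤ q := le_trans (le_max_left _ _) hq
  have hq2 : 2 ≤ q := by omega
  have hA0 : (0:ℝ) < (q:ℝ) := by positivity
  have hA1 : (1:ℝ) ≤ (q:ℝ) := by exact_mod_cast (by omega : 1 ≤ q)
  have hq21 : (21:ℝ) ≤ (q:ℝ)^α := by
    have h0 : (21:ℝ)^(1/α) ≤ (q:ℝ) := by
      have h1 : (⌈(21:ℝ)^(1/α)⌉₊ : ℝ) ≤ q := by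
        have : ⌈(21:ℝ)^(1/α)⌉₊ ≤ q := by
          have := le_trans (le_max_right 1000000 (⌈(21:ℝ)^(1/α)⌉₊ + 1)) hq
          omega
        exact_mod_cast this
      exact le_trans (Nat.le_ceil _) h1
    calc (21:ℝ) = ((21:ℝ)^(1/α))^α := by
          rw [← Real.rpow_mul (by norm_num), one_div, inv_mul_cancel₀ (ne_of_gt hα0),
            Real.rpow_one]
      _ ≤ (q:ℝ)^α := Real.rpow_le_rpow (by positivity) h0 hα0.le
  -- the coefficients
  set a : ℕ → ℝ := fun i => (q:ℝ) ^ ((i:ℝ)*(α-1) + α/2) with ha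
  have hapos : ∀ i, 0 < a i := fun i => Real.rpow_pos_of_pos hA0 _
  have hcoeff : ∀ i : ℕ, a i * ((q ^ i : ℕ) : ℝ) = (q:ℝ) ^ ((i:ℝ)*(α-1) + α/2 + (i:ℝ)) := by
    intro i
    simp only [ha]
    rw [show ((q ^ i : ℕ) : ℝ) = (q:ℝ) ^ ((i:ℕ):ℝ) by rw [Real.rpow_natCast]; push_cast; ring,
      ← Real.rpow_add hA0]
  have hc : ∀ i : ℕ, |a i| * ((q ^ i : ℕ) : ℝ) ≤ (q:ℝ) ^ (i+1) := by
    intro i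
    rw [abs_of_pos (hapos i), hcoeff i]
    calc (q:ℝ) ^ ((i:ℝ)*(α-1) + α/2 + (i:ℝ)) ≤ (q:ℝ) ^ (((i+1:ℕ)):ℝ) := by
          apply Real.rpow_le_rpow_of_exponent_le hA1
          push_cast
          nlinarith [Nat.cast_nonneg (α := ℝ) i]
      _ = (q:ℝ) ^ (i+1) := Real.rpow_natCast _ _
  -- ψt as composition
  have hψe : ψt = (fun y : ℂ => ∑' i : ℕ, (a i : ℂ) * y ^ (q ^ i)) ∘
      (EuclideanSpace.proj (𝕜 := ℂ) p) := by
    funext z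
    rw [hψ z]
    rfl
  -- derivative at points of the ball
  have hfd : ∀ z ∈ unitBall N, HasFDerivAt ψt
      ((∑' i : ℕ, (a i : ℂ) * ((q ^ i : ℕ) : ℂ) * (z p) ^ (q ^ i - 1)) •
        (EuclideanSpace.proj (𝕜 := ℂ) p)) z := by
    intro z hz
    have hz1 : ‖z‖ < 1 := by
      rw [unitBall, Metric.mem_ball, dist_zero_right] at hz
      exact hz
    have hzp : ‖z p‖ < 1 := lt_of_le_of_lt (norm_coord z p) hz1
    have hD := hasDerivAt_lacunary q hq2 a hc (z p) hzp
    rw [hψe]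
    exact hD.comp_hasFDerivAt z (EuclideanSpace.proj (𝕜 := ℂ) p).hasFDerivAt
  -- radial derivative formula
  have hrad : ∀ z ∈ unitBall N, radD ψt z =
      ∑' i : ℕ, (((q : ℝ) ^ ((i : ℝ) * (α - 1) + α / 2 + (i : ℝ)) : ℝ) : ℂ) * (z p) ^ (q ^ i) := by
    intro z hz
    have h1 : radD ψt z = (∑' i : ℕ, (a i : ℂ) * ((q ^ i : ℕ) : ℂ) * (z p) ^ (q ^ i - 1)) *
        (z p) := by
      rw [radD, (hfd z hz).fderiv]
      simp [ContinuousLinearMap.smul_apply, smul_eq_mul]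
    rw [h1, ← tsum_mul_right]
    apply tsum_congr
    intro i
    have h2 : (z p) ^ (q ^ i - 1) * (z p) = (z p) ^ (q ^ i) := by
      rw [← pow_succ]
      congr 1
      have : 1 ≤ q ^ i := Nat.one_le_pow _ _ (by omega)
      omega
    have h3 : (a i : ℂ) * ((q ^ i : ℕ) : ℂ) =
        (((q : ℝ) ^ ((i : ℝ) * (α - 1) + α / 2 + (i : ℝ)) : ℝ) : ℂ) := by
      rw [show ((q ^ i : ℕ) : ℂ) = (((q ^ i : ℕ) : ℝ) : ℂ) by push_cast; ring,
        ← Complex.ofReal_mul, hcoeff i]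
    rw [mul_assoc, h2, h3]
  refine ⟨?_, hrad, ?_⟩
  · intro z hz
    exact ((hfd z hz).differentiableAt).differentiableWithinAt
  · intro k hk z hz hzp1 hzp2 hz3
    rw [hrad z hz]
    have hest := estimate q α hα0 hα1 hq6 hq21 k hk (z p) ‖z‖ hzp1 hzp2 hz3
    refine le_trans hest (le_of_eq ?_)
    congr 1
    apply tsum_congr
    intro i
    congr 2
    ring
end
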